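/- arXiv:1710.08475 — 7 statements merged into one kernel-verified Lean document; each statement's English description precedes it below -/
import Mathlib

section
/- For a matrix P ∈ M_n, the Schur multiplication map S_P : M_n → M_n, S_P(B) = P ∘ B (entrywise product), is PPT if and only if P is positive semidefinite and diagonal. -/
open Matrix Kronecker BigOperators
open scoped ComplexOrder

noncomputable section

/-- The Choi matrix of a linear map `φ : M_p → M_q`. -/
def choi {p q : ℕ} (φ : Matrix (Fin p) (Fin p) ℂ →ₗ[ℂ] Matrix (Fin q) (Fin q) ℂ) :
    Matrix (Fin p × Fin q) (Fin p × Fin q) ℂ :=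
  fun ik jl => φ (Matrix.single ik.1 jl.1 1) ik.2 jl.2

/-- A map is completely positive iff its Choi matrix is positive semidefinite. -/
def IsCP {p q : ℕ} (φ : Matrix (Fin p) (Fin p) ℂ →ₗ[ℂ] Matrix (Fin q) (Fin q) ℂ) : Prop :=
  (choi φ).PosSemidef

/-- The transpose map on `M_n`. -/
def transposeMap (n : ℕ) : Matrix (Fin n) (Fin n) ℂ →ₗ[ℂ] Matrix (Fin n) (Fin n) ℂ where
  toFun X := Xᵀ
  map_add' X Y := Matrix.transpose_add X Y
  map_smul' c X := Matrix.transpose_smul c X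

/-- A CP map is PPT if its composition with the transpose is CP. -/
def IsPPT {p q : ℕ} (φ : Matrix (Fin p) (Fin p) ℂ →ₗ[ℂ] Matrix (Fin q) (Fin q) ℂ) : Prop :=
  IsCP φ ∧ IsCP ((transposeMap q).comp φ)

/-- Separability of a matrix on a tensor (Kronecker) product. -/
def Separable {p q : ℕ} (M : Matrix (Fin p × Fin q) (Fin p × Fin q) ℂ) : Prop :=
  ∃ (m : ℕ) (P : Fin m → Matrix (Fin p) (Fin p) ℂ) (Q : Fin m → Matrix (Fin q) (Fin q) ℂ),
    (∀ k, (P k).PosSemidef) ∧ (∀ k, (Q k).PosSemidef) ∧ M = ∑ k, P k ⊗ₖ Q k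

/-- A map is entanglement breaking iff its Choi matrix is separable. -/
def IsEB {p q : ℕ} (φ : Matrix (Fin p) (Fin p) ℂ →ₗ[ℂ] Matrix (Fin q) (Fin q) ℂ) : Prop :=
  Separable (choi φ)

/-- Schur (Hadamard) multiplication by `P` as a linear map. -/
def schurMap {n : ℕ} (P : Matrix (Fin n) (Fin n) ℂ) :
    Matrix (Fin n) (Fin n) ℂ →ₗ[ℂ] Matrix (Fin n) (Fin n) ℂ where
  toFun B := P ⊙ B
  map_add' B C := Matrix.hadamard_add P B C
  map_smul' c B := (Matrix.hadamard_smul P B c).symm ▸ rfl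

/-- The map `δ(X) = (Tr X / p) • I`. -/
def deltaMap (p : ℕ) : Matrix (Fin p) (Fin p) ℂ →ₗ[ℂ] Matrix (Fin p) (Fin p) ℂ where
  toFun X := (Matrix.trace X / p) • 1
  map_add' X Y := by simp [Matrix.trace_add, add_div, add_smul]
  map_smul' c X := by simp [mul_div_assoc, smul_smul]

/-- The one-parameter family `γ_t = t δ + S_A`. -/
def gammaMap {p : ℕ} (t : ℝ) (A : Matrix (Fin p) (Fin p) ℂ) :
    Matrix (Fin p) (Fin p) ℂ →ₗ[ℂ] Matrix (Fin p) (Fin p) ℂ :=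
  (t : ℂ) • deltaMap p + schurMap A

end


section Aux

lemma choi_schur_apply {n : ℕ} (P : Matrix (Fin n) (Fin n) ℂ) (ik jl : Fin n × Fin n) :
    choi (schurMap P) ik jl = if ik.1 = ik.2 ∧ jl.1 = jl.2 then P ik.2 jl.2 else 0 := by
  simp [choi, schurMap, Matrix.hadamard, Matrix.single, mul_ite]

lemma choi_T_schur_apply {n : ℕ} (P : Matrix (Fin n) (Fin n) ℂ) (ik jl : Fin n × Fin n) :
    choi ((transposeMap n).comp (schurMap P)) ik jl =
      if ik.1 = jl.2 ∧ jl.1 = ik.2 then P jl.2 ik.2 else 0 := by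
  simp [choi, schurMap, transposeMap, Matrix.transpose_apply, Matrix.hadamard,
    Matrix.single, mul_ite]

lemma choi_schur_eq_diagonal {n : ℕ} (P : Matrix (Fin n) (Fin n) ℂ) (hDiag : P.IsDiag) :
    choi (schurMap P) =
      Matrix.diagonal (fun ik : Fin n × Fin n => if ik.1 = ik.2 then P ik.1 ik.1 else 0) := by
  ext ⟨i, k⟩ ⟨j, l⟩
  rw [choi_schur_apply]
  simp only [Matrix.diagonal_apply, Prod.mk.injEq]
  split_ifs <;> simp_all
  all_goals first
    | rfl
    | (apply hDiag; intro h; subst h; simp_all)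
    | tauto
    | aesop

lemma choi_T_schur_eq_diagonal {n : ℕ} (P : Matrix (Fin n) (Fin n) ℂ) (hDiag : P.IsDiag) :
    choi ((transposeMap n).comp (schurMap P)) =
      Matrix.diagonal (fun ik : Fin n × Fin n => if ik.1 = ik.2 then P ik.1 ik.1 else 0) := by
  ext ⟨i, k⟩ ⟨j, l⟩
  rw [choi_T_schur_apply]
  simp only [Matrix.diagonal_apply, Prod.mk.injEq]
  split_ifs <;> simp_all
  all_goals first
    | rfl
    | (apply hDiag; intro h; subst h; simp_all)
    | tauto
    | aesop

end Aux

/-- the Schur multiplication map `S_P` is PPT iff `P` is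
positive semidefinite and diagonal. -/
theorem schurMap_isPPT_iff {n : ℕ} (P : Matrix (Fin n) (Fin n) ℂ) :
    IsPPT (schurMap P) ↔ P.PosSemidef ∧ P.IsDiag := by
  constructor
  · rintro ⟨h1, h2⟩
    have hPsd : P.PosSemidef := by
      have := h1.submatrix (fun i : Fin n => ((i, i) : Fin n × Fin n))
      have hsub : (choi (schurMap P)).submatrix
          (fun i : Fin n => ((i, i) : Fin n × Fin n))
          (fun i : Fin n => ((i, i) : Fin n × Fin n)) = P := by
        ext i j
        simp [Matrix.submatrix_apply, choi_schur_apply]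
      rwa [hsub] at this
    refine ⟨hPsd, fun i j hij => ?_⟩
    set N := choi ((transposeMap n).comp (schurMap P)) with hN
    have hS := h2.submatrix (fun a : Fin 2 => if a = 0 then ((i, j) : Fin n × Fin n) else (j, i))
    set S := N.submatrix (fun a : Fin 2 => if a = 0 then ((i, j) : Fin n × Fin n) else (j, i))
      (fun a : Fin 2 => if a = 0 then ((i, j) : Fin n × Fin n) else (j, i)) with hSdef
    have hS00 : S 0 0 = 0 := by
      simp [hSdef, Matrix.submatrix_apply, hN, choi_T_schur_apply, hij]
    have hS11 : S 1 1 = 0 := by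
      simp [hSdef, Matrix.submatrix_apply, hN, choi_T_schur_apply, Ne.symm hij]
    have hS01 : S 0 1 = P i j := by
      simp [hSdef, Matrix.submatrix_apply, hN, choi_T_schur_apply]
    have hS10 : S 1 0 = P j i := by
      simp [hSdef, Matrix.submatrix_apply, hN, choi_T_schur_apply]
    have hji : P j i = (starRingEnd ℂ) (P i j) := by
      simpa using (hPsd.1.apply j i).symm
    have key := hS.dotProduct_mulVec_nonneg ![P i j, -1]
    have hcalc : star ![P i j, -1] ⬝ᵥ S *ᵥ ![P i j, -1]
        = ((-(2 * Complex.normSq (P i j)) : ℝ) : ℂ) := by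
      simp only [dotProduct, Matrix.mulVec, Fin.sum_univ_two]
      simp [hS00, hS11, hS01, hS10, hji]
      rw [mul_comm ((starRingEnd ℂ) (P i j)) (P i j), Complex.mul_conj]
      ring
    rw [hcalc] at key
    have hre : (0:ℝ) ≤ -(2 * Complex.normSq (P i j)) := by
      exact_mod_cast key
    have hle : Complex.normSq (P i j) ≤ 0 := by linarith
    exact Complex.normSq_eq_zero.mp (le_antisymm hle (Complex.normSq_nonneg _))
  · rintro ⟨hPsd, hDiag⟩
    have hnn : ∀ i, (0:ℂ) ≤ P i i := fun i => by
      simpa [dotProduct, Pi.single_apply] using hPsd.dotProduct_mulVec_nonneg (Pi.single i 1)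
    have hd : ∀ ik : Fin n × Fin n, (0:ℂ) ≤ (if ik.1 = ik.2 then P ik.1 ik.1 else 0) := by
      intro ik; split <;> simp [hnn]
    constructor
    · unfold IsCP
      rw [choi_schur_eq_diagonal P hDiag]
      exact Matrix.posSemidef_diagonal_iff.mpr hd
    · unfold IsCP
      rw [choi_T_schur_eq_diagonal P hDiag]
      exact Matrix.posSemidef_diagonal_iff.mpr hd
end

section
/- Let φ : M_n → M_n be an idempotent unital completely positive map whose range, equipped with the Choi–Effros product a ∗ b = φ(ab), contains a direct summand *-isomorphic to M_k for some k ≥ 2. Then φ is not PPT. -/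
open Matrix Kronecker BigOperators
open scoped ComplexOrder

open Matrix BigOperators
open scoped ComplexOrder

namespace NPPT

variable {α : Type*} {β : Type*} {γ : Type*}
variable [Fintype α] [DecidableEq α] [Fintype β] [DecidableEq β] [Fintype γ] [DecidableEq γ]

set_option linter.unusedSectionVars false

/-- Choi matrix over general index types. -/
def mchoi (ψ : Matrix α α ℂ →ₗ[ℂ] Matrix β β ℂ) : Matrix (α × β) (α × β) ℂ :=
  fun ab cd => ψ (Matrix.single ab.1 cd.1 1) ab.2 cd.2

lemma apply_eq_sum (ψ : Matrix α α ℂ →ₗ[ℂ] Matrix β β ℂ) (X : Matrix α α ℂ) :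
    ψ X = ∑ a : α, ∑ c : α, X a c • ψ (Matrix.single a c 1) := by
  conv_lhs => rw [Matrix.matrix_eq_sum_single X]
  rw [map_sum]
  refine Finset.sum_congr rfl fun a _ => ?_
  rw [map_sum]
  refine Finset.sum_congr rfl fun c _ => ?_
  rw [show Matrix.single a c (X a c) = X a c • Matrix.single a c (1:ℂ) by
    rw [Matrix.smul_single, smul_eq_mul, mul_one], LinearMap.map_smul]

lemma apply_entry (ψ : Matrix α α ℂ →ₗ[ℂ] Matrix β β ℂ) (X : Matrix α α ℂ) (b d : β) :
    ψ X b d = ∑ a : α, ∑ c : α, X a c * mchoi ψ (a, b) (c, d) := by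
  rw [apply_eq_sum ψ X]
  simp [mchoi, Matrix.sum_apply]

lemma herm_map {ψ : Matrix α α ℂ →ₗ[ℂ] Matrix β β ℂ} (h : (mchoi ψ).IsHermitian)
    (X : Matrix α α ℂ) : ψ Xᴴ = (ψ X)ᴴ := by
  ext b d
  rw [Matrix.conjTranspose_apply, apply_entry, apply_entry, Finset.sum_comm, star_sum]
  refine Finset.sum_congr rfl fun c _ => ?_
  rw [star_sum]
  refine Finset.sum_congr rfl fun a _ => ?_
  rw [star_mul', Matrix.conjTranspose_apply]
  have h2 := congrFun (congrFun h ((a, b) : α × β)) ((c, d) : α × β)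
  rw [Matrix.conjTranspose_apply] at h2
  rw [h2]

/-- block of a matrix over a product index -/
def blk (X : Matrix (γ × α) (γ × α) ℂ) (i j : γ) : Matrix α α ℂ := fun a c => X (i, a) (j, c)

/-- blockwise application of a map -/
def blockMapL (γ : Type*) [Fintype γ] [DecidableEq γ]
    (ψ : Matrix α α ℂ →ₗ[ℂ] Matrix β β ℂ) :
    Matrix (γ × α) (γ × α) ℂ →ₗ[ℂ] Matrix (γ × β) (γ × β) ℂ where
  toFun X := fun p q => ψ (blk X p.1 q.1) p.2 q.2
  map_add' X Y := by
    funext p q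
    show ψ (blk (X + Y) p.1 q.1) p.2 q.2
        = ψ (blk X p.1 q.1) p.2 q.2 + ψ (blk Y p.1 q.1) p.2 q.2
    have hb : blk (X + Y) p.1 q.1 = blk X p.1 q.1 + blk Y p.1 q.1 := rfl
    rw [hb, map_add, Matrix.add_apply]
  map_smul' c X := by
    funext p q
    show ψ (blk (c • X) p.1 q.1) p.2 q.2 = (c • ψ (blk X p.1 q.1)) p.2 q.2
    have hb : blk (c • X) p.1 q.1 = c • blk X p.1 q.1 := rfl
    rw [hb, LinearMap.map_smul]

lemma blockMapL_apply (ψ : Matrix α α ℂ →ₗ[ℂ] Matrix β β ℂ) (X : Matrix (γ × α) (γ × α) ℂ)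
    (p q : γ × β) : blockMapL γ ψ X p q = ψ (blk X p.1 q.1) p.2 q.2 := rfl

lemma blockMapL_entry (ψ : Matrix α α ℂ →ₗ[ℂ] Matrix β β ℂ) (X : Matrix (γ × α) (γ × α) ℂ)
    (i j : γ) (b d : β) :
    blockMapL γ ψ X (i, b) (j, d) = ∑ a : α, ∑ c : α, X (i, a) (j, c) * mchoi ψ (a, b) (c, d) := by
  rw [blockMapL_apply, apply_entry]
  rfl

lemma posSemidef_eq_ctm_self {M : Matrix β β ℂ} (h : M.PosSemidef) :
    ∃ C : Matrix β β ℂ, M = Cᴴ * C := by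
  open scoped MatrixOrder in
  obtain ⟨C, hC⟩ := CStarAlgebra.nonneg_iff_eq_star_mul_self.mp h.nonneg
  exact ⟨C, hC⟩

lemma posSemidef_sum {ι : Type*} (s : Finset ι) (f : ι → Matrix β β ℂ)
    (h : ∀ i ∈ s, (f i).PosSemidef) : (∑ i ∈ s, f i).PosSemidef := by
  classical
  induction s using Finset.induction with
  | empty => simpa using Matrix.PosSemidef.zero
  | @insert a s ha ih =>
    rw [Finset.sum_insert ha]
    exact (h a (Finset.mem_insert_self a s)).add (ih fun i hi => h i (Finset.mem_insert_of_mem hi))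

lemma sum_reorder4 {δ1 δ2 δ3 δ4 : Type*} [Fintype δ1] [Fintype δ2] [Fintype δ3] [Fintype δ4]
    (f : δ1 → δ2 → δ3 → δ4 → ℂ) :
    ∑ a : δ1, ∑ c : δ2, ∑ g : δ3, ∑ e : δ4, f a c g e
      = ∑ g : δ3, ∑ e : δ4, ∑ c : δ2, ∑ a : δ1, f a c g e := by
  calc ∑ a : δ1, ∑ c : δ2, ∑ g : δ3, ∑ e : δ4, f a c g e
      = ∑ c : δ2, ∑ a : δ1, ∑ g : δ3, ∑ e : δ4, f a c g e := Finset.sum_comm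
    _ = ∑ c : δ2, ∑ g : δ3, ∑ a : δ1, ∑ e : δ4, f a c g e :=
        Finset.sum_congr rfl fun c _ => Finset.sum_comm
    _ = ∑ c : δ2, ∑ g : δ3, ∑ e : δ4, ∑ a : δ1, f a c g e :=
        Finset.sum_congr rfl fun c _ => Finset.sum_congr rfl fun g _ => Finset.sum_comm
    _ = ∑ g : δ3, ∑ c : δ2, ∑ e : δ4, ∑ a : δ1, f a c g e := Finset.sum_comm
    _ = ∑ g : δ3, ∑ e : δ4, ∑ c : δ2, ∑ a : δ1, f a c g e :=
        Finset.sum_congr rfl fun g _ => Finset.sum_comm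

/-- Blockwise application of a map with PSD Choi matrix preserves PSD. -/
lemma blockMap_posSemidef (ψ : Matrix α α ℂ →ₗ[ℂ] Matrix β β ℂ)
    (h : (mchoi ψ).PosSemidef) {M : Matrix (γ × α) (γ × α) ℂ} (hM : M.PosSemidef) :
    (blockMapL γ ψ M).PosSemidef := by
  obtain ⟨C, rfl⟩ := posSemidef_eq_ctm_self hM
  set G : (γ × α) → Matrix (α × β) (γ × β) ℂ :=
    fun l => Matrix.of fun ab jd => if ab.2 = jd.2 then C l (jd.1, ab.1) else 0 with hG
  have key : blockMapL γ ψ (Cᴴ * C) = ∑ l : γ × α, (G l)ᴴ * mchoi ψ * (G l) := by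
    ext ⟨i, b⟩ ⟨j, d⟩
    rw [blockMapL_entry]
    simp only [Matrix.sum_apply, Matrix.mul_apply, Matrix.conjTranspose_apply, hG,
      Matrix.of_apply, apply_ite (star : ℂ → ℂ), star_zero, ite_mul, zero_mul, mul_ite, mul_zero,
      Fintype.sum_prod_type, Finset.sum_ite_eq, Finset.sum_ite_eq', Finset.mem_univ, if_true]
    simp only [Finset.sum_mul, Finset.mul_sum]
    rw [sum_reorder4]
    refine Finset.sum_congr rfl fun g _ => Finset.sum_congr rfl fun e _ =>
      Finset.sum_congr rfl fun c _ => Finset.sum_congr rfl fun a _ => ?_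
    ring
  rw [key]
  exact posSemidef_sum _ _ fun l _ => h.conjTranspose_mul_mul_same _

end NPPT

namespace NPPT
variable {α : Type*} {β : Type*} {γ : Type*}
variable [Fintype α] [DecidableEq α] [Fintype β] [DecidableEq β] [Fintype γ] [DecidableEq γ]
set_option linter.unusedSectionVars false

/-- Positive-map property. -/
lemma map_posSemidef (ψ : Matrix α α ℂ →ₗ[ℂ] Matrix β β ℂ)
    (h : (mchoi ψ).PosSemidef) {M : Matrix α α ℂ} (hM : M.PosSemidef) :
    (ψ M).PosSemidef := by
  have h1 : (M.submatrix (Prod.snd : Unit × α → α) Prod.snd).PosSemidef := hM.submatrix _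
  have h2 := blockMap_posSemidef (γ := Unit) ψ h h1
  have h3 : ψ M = (blockMapL Unit ψ (M.submatrix Prod.snd Prod.snd)).submatrix
      (fun b : β => ((), b)) (fun d : β => ((), d)) := by
    ext b d
    rfl
  rw [h3]
  exact h2.submatrix _

/-- The Choi matrix of the blockwise extension is PSD. -/
lemma mchoi_blockMap_posSemidef (ψ : Matrix α α ℂ →ₗ[ℂ] Matrix β β ℂ)
    (h : (mchoi ψ).PosSemidef) :
    (mchoi (blockMapL γ ψ)).PosSemidef := by
  set G : Matrix (α × β) ((γ × α) × (γ × β)) ℂ :=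
    Matrix.of fun ab pq => if ab = (pq.1.2, pq.2.2) ∧ pq.1.1 = pq.2.1 then 1 else 0 with hG
  have key : mchoi (blockMapL γ ψ) = Gᴴ * mchoi ψ * G := by
    ext ⟨⟨i, a⟩, ⟨i', b⟩⟩ ⟨⟨j, c⟩, ⟨j', d⟩⟩
    have hblk : blk (Matrix.single ((i, a) : γ × α) ((j, c) : γ × α) (1:ℂ)) i' j'
        = if i = i' ∧ j = j' then Matrix.single a c 1 else 0 := by
      ext a' c'
      simp only [blk, Matrix.single, Matrix.of_apply, Prod.mk.injEq]
      by_cases h1 : i = i' <;> by_cases h2 : j = j' <;>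
        simp [h1, h2, and_assoc, and_left_comm]
    have lhs_eq : mchoi (blockMapL γ ψ) ((i, a), (i', b)) ((j, c), (j', d))
        = if i = i' ∧ j = j' then mchoi ψ (a, b) (c, d) else 0 := by
      show blockMapL γ ψ (Matrix.single ((i, a) : γ × α) ((j, c) : γ × α) (1:ℂ)) (i', b) (j', d)
        = _
      rw [blockMapL_apply]
      show ψ (blk (Matrix.single ((i, a) : γ × α) ((j, c) : γ × α) (1:ℂ)) i' j') b d = _
      rw [hblk]
      split_ifs with hc
      · rfl
      · rw [map_zero]
        rfl
    rw [lhs_eq]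
    simp only [Matrix.mul_apply, Matrix.conjTranspose_apply, hG, Matrix.of_apply,
      apply_ite (star : ℂ → ℂ), star_one, star_zero, ite_mul, zero_mul, mul_ite, mul_zero,
      ite_and, Finset.sum_ite_eq, Finset.sum_ite_eq', Finset.mem_univ, if_true]
    split_ifs with h1 h2 h2 <;> simp_all
  rw [key]
  exact h.conjTranspose_mul_mul_same _

lemma dot_conjTranspose (R : Matrix β β ℂ) (w : β → ℂ) :
    star w ⬝ᵥ Rᴴ *ᵥ w = star (star w ⬝ᵥ R *ᵥ w) := by
  simp only [dotProduct, Matrix.mulVec, Matrix.conjTranspose_apply, star_sum, star_mul',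
    star_star, Pi.star_apply, Finset.mul_sum, Finset.sum_mul]
  rw [Finset.sum_comm]
  exact Finset.sum_congr rfl fun jj _ => Finset.sum_congr rfl fun ii _ => by ring

lemma dot_block (M : Matrix (γ × α) (γ × α) ℂ) (v : γ × α → ℂ) :
    star v ⬝ᵥ M *ᵥ v = ∑ i : γ, ∑ j : γ,
      star (fun a => v (i, a)) ⬝ᵥ (blk M i j) *ᵥ (fun a => v (j, a)) := by
  simp only [dotProduct, Matrix.mulVec, blk, Pi.star_apply, Fintype.sum_prod_type,
    Finset.mul_sum]
  refine Finset.sum_congr rfl fun i _ => ?_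
  rw [Finset.sum_comm]

lemma schwarz (ψ : Matrix α α ℂ →ₗ[ℂ] Matrix β β ℂ)
    (hch : (mchoi ψ).PosSemidef) (h1 : ψ 1 = 1) (x : Matrix α α ℂ) :
    (ψ (xᴴ * x) - (ψ x)ᴴ * (ψ x)).PosSemidef := by
  have hherm : (ψ (xᴴ * x)).IsHermitian := by
    show _ = _
    rw [← herm_map hch.1, Matrix.conjTranspose_mul, Matrix.conjTranspose_conjTranspose]
  set r : Matrix ((Fin 2) × α) ((Fin 2) × α) ℂ :=
    Matrix.of fun p q => (if p.1 = 0 then (if q.1 = 0 then (1 : Matrix α α ℂ) else x) else 0) p.2 q.2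
    with hr
  have hblk : ∀ i j : Fin 2, blk (rᴴ * r) i j
      = (if i = 0 then (1 : Matrix α α ℂ) else x)ᴴ * (if j = 0 then (1 : Matrix α α ℂ) else x) := by
    intro i j
    ext a c
    simp only [blk, Matrix.mul_apply, Matrix.conjTranspose_apply, hr, Matrix.of_apply,
      Fintype.sum_prod_type, Fin.sum_univ_two, Fin.isValue]
    simp only [show ((0:Fin 2) = 0) = True by simp, show ((1:Fin 2) = 0) = False by simp,
      if_true, if_false]
    simp [Matrix.zero_apply]
  have hN := blockMap_posSemidef (γ := Fin 2) ψ hch (Matrix.posSemidef_conjTranspose_mul_self r)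
  refine Matrix.PosSemidef.of_dotProduct_mulVec_nonneg ?_ ?_
  · exact hherm.sub (Matrix.isHermitian_conjTranspose_mul_self _)
  · intro w
    set u : β → ℂ := (ψ x) *ᵥ w with hu
    set W : (Fin 2) × β → ℂ := fun p => if p.1 = 0 then (-u) p.2 else w p.2 with hW
    have hform := hN.dotProduct_mulVec_nonneg W
    rw [dot_block] at hform
    have hWblk0 : (fun b => W ((0 : Fin 2), b)) = -u := by funext b; simp [hW]
    have hWblk1 : (fun b => W ((1 : Fin 2), b)) = w := by
      funext b; simp [hW, show ((1:Fin 2) = 0) = False by simp]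
    have hblkN : ∀ i j : Fin 2, blk (blockMapL (Fin 2) ψ (rᴴ * r)) i j
        = ψ ((if i = 0 then (1 : Matrix α α ℂ) else x)ᴴ * (if j = 0 then (1 : Matrix α α ℂ) else x)) := by
      intro i j
      ext b d
      show blockMapL (Fin 2) ψ (rᴴ * r) (i, b) (j, d) = _
      rw [blockMapL_apply, hblk]
    rw [Fin.sum_univ_two] at hform
    conv at hform => rw [Fin.sum_univ_two, Fin.sum_univ_two]
    simp only [hblkN, hWblk0, hWblk1] at hform
    simp only [show ((0:Fin 2) = 0) = True by simp, show ((1:Fin 2) = 0) = False by simp,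
      if_true, if_false] at hform
    simp only [Matrix.conjTranspose_one, one_mul, mul_one] at hform
    rw [h1] at hform
    rw [herm_map hch.1 x] at hform
    have e00 : star (-u) ⬝ᵥ (1 : Matrix β β ℂ) *ᵥ (-u) = star u ⬝ᵥ u := by
      rw [Matrix.one_mulVec, star_neg, neg_dotProduct, dotProduct_neg, neg_neg]
    have e01 : star (-u) ⬝ᵥ (ψ x) *ᵥ w = -(star u ⬝ᵥ u) := by
      rw [star_neg, neg_dotProduct, hu]
    have e10 : star w ⬝ᵥ (ψ x)ᴴ *ᵥ (-u) = -(star u ⬝ᵥ u) := by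
      rw [Matrix.mulVec_neg, dotProduct_neg, Matrix.dotProduct_mulVec,
        Matrix.vecMul_conjTranspose, star_star, hu]
    rw [e00, e01, e10] at hform
    have target : star w ⬝ᵥ (ψ (xᴴ * x) - (ψ x)ᴴ * (ψ x)) *ᵥ w
        = star u ⬝ᵥ u + -(star u ⬝ᵥ u) + (-(star u ⬝ᵥ u)
          + star w ⬝ᵥ (ψ (xᴴ * x)) *ᵥ w) := by
      rw [Matrix.sub_mulVec, dotProduct_sub]
      have : star w ⬝ᵥ ((ψ x)ᴴ * (ψ x)) *ᵥ w = star u ⬝ᵥ u := by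
        rw [← Matrix.mulVec_mulVec, Matrix.dotProduct_mulVec, Matrix.vecMul_conjTranspose,
          star_star, hu]
      rw [this]
      ring
    rw [target]
    exact hform
end NPPT

namespace NPPT
variable {α : Type*} {β : Type*} {γ : Type*}
variable [Fintype α] [DecidableEq α] [Fintype β] [DecidableEq β] [Fintype γ] [DecidableEq γ]
set_option linter.unusedSectionVars false

lemma sum_two_point {i j : β} (hij : i ≠ j) (f g : β → ℂ) :
    (∑ b : β, ((if b = i then f b else 0) + (if b = j then g b else 0))) = f i + g j := by
  rw [Finset.sum_add_distrib, Finset.sum_ite_eq' Finset.univ i f, Finset.sum_ite_eq' Finset.univ j g]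
  simp

lemma form_two_point (R : Matrix β β ℂ) {i j : β} (hij : i ≠ j) (u v : ℂ) :
    star (fun a => if a = i then u else if a = j then v else 0) ⬝ᵥ
      R *ᵥ (fun a => if a = i then u else if a = j then v else 0)
    = star u * u * R i i + star u * v * R i j + star v * u * R j i + star v * v * R j j := by
  have inner : ∀ a, (R *ᵥ fun b => if b = i then u else if b = j then v else 0) a
      = R a i * u + R a j * v := by
    intro a
    show (∑ b, R a b * (if b = i then u else if b = j then v else 0)) = _
    rw [show (fun b => R a b * (if b = i then u else if b = j then v else 0))
        = fun b => ((if b = i then R a b * u else 0) + (if b = j then R a b * v else 0)) by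
      funext b
      by_cases h1 : b = i <;> by_cases h2 : b = j <;> simp [h1, h2] <;> simp_all]
    exact sum_two_point hij _ _
  show (∑ a, star (if a = i then u else if a = j then v else 0) *
      (R *ᵥ fun b => if b = i then u else if b = j then v else 0) a) = _
  rw [show (fun a => star (if a = i then u else if a = j then v else 0) *
      (R *ᵥ fun b => if b = i then u else if b = j then v else 0) a)
      = fun a => ((if a = i then star u * (R a i * u + R a j * v) else 0)
        + (if a = j then star v * (R a i * u + R a j * v) else 0)) by
    funext a
    rw [inner a]
    by_cases h1 : a = i <;> by_cases h2 : a = j <;> simp [h1, h2] <;> simp_all]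
  rw [sum_two_point hij]
  ring

lemma matrix_eq_zero_of_forms (R : Matrix β β ℂ)
    (h : ∀ w : β → ℂ, star w ⬝ᵥ R *ᵥ w = 0) : R = 0 := by
  have hdiag : ∀ i, R i i = 0 := by
    intro i
    have hh := h (fun a => if a = i then 1 else 0)
    simp only [dotProduct, Matrix.mulVec, Pi.star_apply, apply_ite (star : ℂ → ℂ),
      star_one, star_zero, ite_mul, one_mul, zero_mul, mul_ite, mul_one, mul_zero,
      Finset.sum_ite_eq', Finset.mem_univ, if_true] at hh
    exact hh
  ext i j
  rw [Matrix.zero_apply]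
  by_cases hij : i = j
  · subst hij; exact hdiag i
  · have h1 := h (fun a => if a = i then 1 else if a = j then 1 else 0)
    rw [form_two_point R hij 1 1] at h1
    have h2 := h (fun a => if a = i then 1 else if a = j then Complex.I else 0)
    rw [form_two_point R hij 1 Complex.I] at h2
    rw [hdiag i, hdiag j] at h1 h2
    simp only [star_one, one_mul, mul_one, mul_zero, add_zero, zero_add, Complex.star_def,
      Complex.conj_I] at h1 h2
    have h4 : Complex.I * R i j = Complex.I * R j i := by linear_combination h2
    have h5 : R i j = R j i := mul_left_cancel₀ Complex.I_ne_zero h4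
    rw [← h5] at h1
    linear_combination h1 / 2

lemma psd_trace_nonneg {M : Matrix β β ℂ} (h : M.PosSemidef) : 0 ≤ M.trace := by
  obtain ⟨C, rfl⟩ := posSemidef_eq_ctm_self h
  rw [Matrix.trace]
  refine Finset.sum_nonneg fun i _ => ?_
  rw [Matrix.diag_apply, Matrix.mul_apply]
  refine Finset.sum_nonneg fun j _ => ?_
  rw [Matrix.conjTranspose_apply]
  exact star_mul_self_nonneg _

lemma psd_trace_eq_zero {M : Matrix β β ℂ} (h : M.PosSemidef) (ht : M.trace = 0) : M = 0 := by
  obtain ⟨C, rfl⟩ := posSemidef_eq_ctm_self h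
  have expand : (Cᴴ * C).trace = ∑ i : β, ∑ j : β, star (C j i) * C j i := by
    simp [Matrix.trace, Matrix.diag, Matrix.mul_apply, Matrix.conjTranspose_apply]
  rw [expand] at ht
  have h1 := (Finset.sum_eq_zero_iff_of_nonneg
    (fun i _ => Finset.sum_nonneg fun j _ => star_mul_self_nonneg (C j i))).mp ht
  have hC : C = 0 := by
    ext j i
    have h2 := (Finset.sum_eq_zero_iff_of_nonneg
      (fun j _ => star_mul_self_nonneg (C j i))).mp (h1 i (Finset.mem_univ i)) j (Finset.mem_univ j)
    have h3 : ((Complex.normSq (C j i) : ℝ) : ℂ) = 0 := by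
      rw [← Complex.mul_conj (C j i)]
      rw [Complex.star_def] at h2
      rw [← h2]; ring
    rw [Matrix.zero_apply]
    exact Complex.normSq_eq_zero.mp (by exact_mod_cast h3)
  rw [hC]
  simp

/-- Choi–Effros module property. -/
lemma module_lemma (ψ : Matrix α α ℂ →ₗ[ℂ] Matrix α α ℂ)
    (hch : (mchoi ψ).PosSemidef) (h1 : ψ 1 = 1) (hid : ∀ X, ψ (ψ X) = ψ X)
    {a : Matrix α α ℂ} (ha : ψ a = a) (x : Matrix α α ℂ) :
    ψ (a * ψ x) = ψ (a * x) := by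
  have hkill : ∀ (a c : Matrix α α ℂ), ψ a = a → ψ c = 0 → ψ (aᴴ * c) = 0 := by
    intro a c ha hc
    set R := ψ (aᴴ * c) with hR
    have hRconj : ψ (cᴴ * a) = Rᴴ := by
      rw [hR, ← herm_map hch.1 (aᴴ * c), Matrix.conjTranspose_mul,
        Matrix.conjTranspose_conjTranspose]
    have main : ∀ w : α → ℂ, star w ⬝ᵥ R *ᵥ w = 0 := by
      intro w
      set S := ψ (cᴴ * c) with hS
      have hSpsd : S.PosSemidef := map_posSemidef ψ hch (Matrix.posSemidef_conjTranspose_mul_self c)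
      set s : ℂ := star w ⬝ᵥ S *ᵥ w with hs
      have hs0 : 0 ≤ s := hSpsd.dotProduct_mulVec_nonneg w
      set p : ℂ := star w ⬝ᵥ R *ᵥ w with hp
      have hkey : ∀ t : ℂ, 0 ≤ t * p + star t * star p + t * star t * s := by
        intro t
        have hz : ψ (a + t • c) = a := by
          rw [map_add, LinearMap.map_smul, ha, hc, smul_zero, add_zero]
        have hSch := schwarz ψ hch h1 (a + t • c)
        rw [hz] at hSch
        have hpos := map_posSemidef ψ hch hSch
        have hexp : ψ (ψ ((a + t • c)ᴴ * (a + t • c)) - aᴴ * a)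
            = t • R + star t • Rᴴ + (t * star t) • S := by
          have hmulexp : (a + t • c)ᴴ * (a + t • c)
              = aᴴ * a + t • (aᴴ * c) + star t • (cᴴ * a) + (t * star t) • (cᴴ * c) := by
            rw [Matrix.conjTranspose_add, Matrix.conjTranspose_smul]
            rw [Matrix.add_mul, Matrix.mul_add, Matrix.mul_add]
            rw [Matrix.smul_mul, Matrix.mul_smul, Matrix.mul_smul, Matrix.smul_mul]
            rw [smul_smul]
            abel_nf
          rw [map_sub, hid, hmulexp]
          simp only [map_add, LinearMap.map_smul, hRconj, ← hR, ← hS]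
          abel
        have hfp := hpos.dotProduct_mulVec_nonneg w
        rw [hexp] at hfp
        simpa only [Matrix.add_mulVec, Matrix.smul_mulVec, dotProduct_add,
          dotProduct_smul, smul_eq_mul, ← hp, ← hs, dot_conjTranspose, ← hR] using hfp
      -- scalar argument : p = 0
      by_contra hpne
      have hnp : 0 < Complex.normSq p := by
        simpa [Complex.normSq_pos] using hpne
      have hsim : s.im = 0 := by
        have := (Complex.le_def.mp hs0).2
        simpa using this.symm
      set σ : ℝ := s.re with hσ
      have hσ0 : 0 ≤ σ := by
        have := (Complex.le_def.mp hs0).1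
        simpa [hσ] using this
      set ε : ℝ := 1 / (σ + 1) with hε
      have hε0 : 0 < ε := by positivity
      have := hkey (-(ε:ℂ) * star p)
      have hsre : s = ((σ:ℝ):ℂ) := by
        apply Complex.ext
        · simp [hσ]
        · simp [hsim]
      have hps : star p * p = ((Complex.normSq p : ℝ) : ℂ) := by
        rw [Complex.star_def, mul_comm, Complex.mul_conj]
      have h1' : star ((-(ε:ℂ)) * star p) = (-(ε:ℂ)) * p := by
        simp [star_mul', mul_comm]
      have hthis := hkey (-(ε:ℂ) * star p)
      rw [hsre] at hthis
      have hcalc : (-(ε:ℂ) * star p) * p + star (-(ε:ℂ) * star p) * star p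
          + (-(ε:ℂ) * star p) * star (-(ε:ℂ) * star p) * ((σ:ℝ):ℂ)
          = (((-2 * ε * Complex.normSq p + ε^2 * Complex.normSq p * σ : ℝ)):ℂ) := by
        rw [h1']
        push_cast
        linear_combination (-2*(ε:ℂ) + (ε:ℂ)^2 * (σ:ℂ)) * hps
      rw [hcalc] at hthis
      have hreal : (0:ℝ) ≤ -2 * ε * Complex.normSq p + ε^2 * Complex.normSq p * σ := by
        exact Complex.zero_le_real.mp hthis
      have hεσ : ε * σ < 1 := by
        rw [hε, div_mul_eq_mul_div, div_lt_one (by linarith)]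
        linarith
      nlinarith [mul_pos (mul_pos hε0 hnp) (sub_pos.mpr hεσ)]
    have := matrix_eq_zero_of_forms R main
    exact this
  have hstar_a : ψ aᴴ = aᴴ := by rw [herm_map hch.1, ha]
  have hc : ψ (x - ψ x) = 0 := by rw [map_sub, hid, sub_self]
  have hfin := hkill aᴴ (x - ψ x) hstar_a hc
  rw [Matrix.conjTranspose_conjTranspose, Matrix.mul_sub, map_sub, sub_eq_zero] at hfin
  exact hfin.symm

end NPPT

set_option maxHeartbeats 3000000 in
/-- an idempotent unital CP map `φ` on `M_n` whose range, with the
Choi–Effros product `a ∗ b = φ(ab)`, has a direct summand *-isomorphic to `M_k`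
(`k ≥ 2`) — encoded by a surjective *-homomorphism `π` from the Choi–Effros
algebra `(ran φ, ∗)` onto `M_k` — is not PPT. -/
theorem not_ppt_of_matrix_summand {n k : ℕ} (hk : 2 ≤ k)
    (φ : Matrix (Fin n) (Fin n) ℂ →ₗ[ℂ] Matrix (Fin n) (Fin n) ℂ)
    (hidem : φ.comp φ = φ) (hunital : φ 1 = 1) (hcp : IsCP φ)
    (π : Matrix (Fin n) (Fin n) ℂ →ₗ[ℂ] Matrix (Fin k) (Fin k) ℂ)
    (hsurj : ∀ Y : Matrix (Fin k) (Fin k) ℂ, ∃ X, π (φ X) = Y)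
    (hmul : ∀ a ∈ Set.range φ, ∀ b ∈ Set.range φ, π (φ (a * b)) = π a * π b)
    (hstar : ∀ a ∈ Set.range φ, π aᴴ = (π a)ᴴ) :
    ¬ IsPPT φ := by
  classical
  rintro ⟨hcpφ, hppt⟩
  have hid : ∀ X, φ (φ X) = φ X := fun X => by
    have := LinearMap.congr_fun hidem X
    simpa using this
  have hcp' : (NPPT.mchoi φ).PosSemidef := hcp
  have hppt' : (NPPT.mchoi ((transposeMap n).comp φ)).PosSemidef := hppt
  have hherm : ∀ X, φ Xᴴ = (φ X)ᴴ := NPPT.herm_map hcp'.1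
  -- π is unital
  have hπ1 : π 1 = 1 := by
    obtain ⟨X, hX⟩ := hsurj 1
    have h := hmul 1 ⟨1, hunital⟩ (φ X) ⟨X, rfl⟩
    rw [one_mul, hid X, hX] at h
    rw [mul_one] at h
    exact h.symm
  -- matrix unit preimages
  choose pre hpre using hsurj
  set b : Fin k → Fin k → Matrix (Fin n) (Fin n) ℂ :=
    fun l j => φ (pre (Matrix.single l j 1)) with hbdef
  have hbφ : ∀ l j, φ (b l j) = b l j := fun l j => hid _
  have hbπ : ∀ l j, π (b l j) = Matrix.single l j 1 := fun l j => hpre _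
  -- big maps
  set Ψ := NPPT.blockMapL (Fin k) φ with hΨdef
  set Pm := NPPT.blockMapL (Fin k) π with hPmdef
  have hΨch : (NPPT.mchoi Ψ).PosSemidef := NPPT.mchoi_blockMap_posSemidef φ hcp'
  have hblk_one : ∀ i j : Fin k,
      NPPT.blk (1 : Matrix (Fin k × Fin n) (Fin k × Fin n) ℂ) i j
        = if i = j then 1 else 0 := by
    intro i j
    ext a c
    by_cases hij : i = j <;> simp [NPPT.blk, Matrix.one_apply, Prod.ext_iff, hij]
  have hΨ1 : Ψ 1 = 1 := by
    ext ⟨i, a⟩ ⟨j, c⟩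
    rw [hΨdef, NPPT.blockMapL_apply]
    show φ (NPPT.blk 1 i j) a c = _
    rw [hblk_one]
    by_cases hij : i = j <;> simp [hij, hunital, Matrix.one_apply, Prod.ext_iff]
  have hblkΨ : ∀ X (i j : Fin k), NPPT.blk (Ψ X) i j = φ (NPPT.blk X i j) :=
    fun X i j => rfl
  have hΨid : ∀ X, Ψ (Ψ X) = Ψ X := by
    intro X
    ext ⟨i, a⟩ ⟨j, c⟩
    rw [hΨdef, NPPT.blockMapL_apply]
    show φ (NPPT.blk (Ψ X) i j) a c = Ψ X (i, a) (j, c)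
    rw [hblkΨ, hid]
    rfl
  -- the positive block matrix V
  set Bm : Matrix (Fin k × Fin n) (Fin k × Fin n) ℂ :=
    Matrix.of fun p q => b p.1 q.1 p.2 q.2 with hBm
  set M0 := Bmᴴ * Bm with hM0def
  set ψT := (transposeMap n).comp φ with hψT
  set V := (NPPT.blockMapL (Fin k) ψT M0)ᵀ with hVdef
  have hV : V.PosSemidef :=
    (NPPT.blockMap_posSemidef ψT hppt' (Matrix.posSemidef_conjTranspose_mul_self Bm)).transpose
  have hVblk : ∀ i j : Fin k, NPPT.blk V i j = φ (NPPT.blk M0 j i) := by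
    intro i j
    ext a c
    show (NPPT.blockMapL (Fin k) ψT M0)ᵀ (i, a) (j, c) = _
    rw [Matrix.transpose_apply, NPPT.blockMapL_apply]
    show (φ (NPPT.blk M0 j i))ᵀ c a = _
    rw [Matrix.transpose_apply]
  have hVΨ : Ψ V = V := by
    ext ⟨i, a⟩ ⟨j, c⟩
    rw [hΨdef, NPPT.blockMapL_apply]
    show φ (NPPT.blk V i j) a c = V (i, a) (j, c)
    rw [hVblk, hid, ← hVblk]
    rfl
  have hblkM0 : ∀ i j : Fin k, NPPT.blk M0 j i = ∑ l : Fin k, (b l j)ᴴ * (b l i) := by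
    intro i j
    ext a c
    show (Bmᴴ * Bm) (j, a) (i, c) = _
    simp [Matrix.mul_apply, Matrix.conjTranspose_apply, Fintype.sum_prod_type,
      Matrix.sum_apply, hBm]
  -- the image of V under Pm
  set W : Matrix (Fin k × Fin k) (Fin k × Fin k) ℂ :=
    Matrix.of fun p q => if q.1 = p.2 ∧ p.1 = q.2 then (k : ℂ) else 0 with hWdef
  have hπV : ∀ i j : Fin k, π (NPPT.blk V i j) = (k : ℂ) • Matrix.single j i 1 := by
    intro i j
    rw [hVblk, hblkM0, map_sum, map_sum]
    have e2 : ∀ l : Fin k, π (φ ((b l j)ᴴ * (b l i)))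
        = Matrix.single j l 1 * Matrix.single l i 1 := by
      intro l
      have hmembH : (b l j)ᴴ ∈ Set.range φ := ⟨(b l j)ᴴ, by rw [hherm, hbφ]⟩
      rw [hmul _ hmembH _ ⟨b l i, hbφ l i⟩]
      rw [hstar _ ⟨b l j, hbφ l j⟩]
      rw [hbπ, hbπ]
      congr 1
      ext u v
      simp [Matrix.single, Matrix.conjTranspose_apply, and_comm]
    rw [Finset.sum_congr rfl fun l _ => e2 l]
    have e3 : ∀ l : Fin k, Matrix.single j l (1:ℂ) * Matrix.single l i 1
        = Matrix.single j i 1 := by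
      intro l
      rw [Matrix.single_mul_single_same, mul_one]
    rw [Finset.sum_congr rfl fun l _ => e3 l, Finset.sum_const, Finset.card_univ,
      Fintype.card_fin, ← Nat.cast_smul_eq_nsmul ℂ]
  have hPmV : Pm V = W := by
    ext ⟨i, bb⟩ ⟨j, dd⟩
    rw [hPmdef, NPPT.blockMapL_apply]
    show π (NPPT.blk V i j) bb dd = _
    rw [hπV]
    simp [Matrix.single, hWdef, and_comm]
  have hWherm : W.IsHermitian := by
    ext ⟨i, bb⟩ ⟨j, dd⟩
    simp only [Matrix.conjTranspose_apply, hWdef, Matrix.of_apply]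
    split_ifs with h1 h2 h2 <;>
      first
        | simp
        | (exfalso; simp_all; try tauto)
    · tauto
    · tauto
  -- W is not PSD
  set i0 : Fin k := ⟨0, by omega⟩ with hi0
  set i1 : Fin k := ⟨1, by omega⟩ with hi1
  have hne : i0 ≠ i1 := by simp [hi0, hi1, Fin.ext_iff]
  set v : Fin k × Fin k → ℂ :=
    fun p => if p = (i0, i1) then 1 else if p = (i1, i0) then -1 else 0 with hvdef
  have hform : star v ⬝ᵥ W *ᵥ v = -2 * (k : ℂ) := by
    have hWrow : ∀ p q : Fin k × Fin k, W p q = if q = (p.2, p.1) then (k : ℂ) else 0 := by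
      intro p q
      simp only [hWdef, Matrix.of_apply, Prod.ext_iff]
      congr 1
      simp [and_comm, eq_comm]
    have hinner : ∀ p, (W *ᵥ v) p = (k : ℂ) * v (p.2, p.1) := by
      intro p
      show (∑ q, W p q * v q) = _
      rw [Finset.sum_congr rfl fun q _ => by rw [hWrow p q]]
      simp [ite_mul]
    show (∑ p, star (v p) * (W *ᵥ v) p) = _
    rw [Finset.sum_congr rfl fun p _ => by rw [hinner p]]
    have hsplit : (fun p => star (v p) * ((k : ℂ) * v (p.2, p.1)))
        = fun p => ((if p = (i0, i1) then -(k:ℂ) else 0)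
            + (if p = (i1, i0) then -(k:ℂ) else 0)) := by
      funext p
      by_cases h1 : p = (i0, i1)
      · have : ((i1 : Fin k), (i0 : Fin k)) ≠ (i0, i1) := by
          simp [Prod.ext_iff]; intro h; exact absurd h.symm hne
        subst h1
        simp [hvdef, this, hne]
      · by_cases h2 : p = (i1, i0)
        · have : ((i0 : Fin k), (i1 : Fin k)) ≠ (i1, i0) := by
            simp [Prod.ext_iff]; intro h; exact absurd h hne
          subst h2
          simp [hvdef, this, hne.symm]
        · simp [hvdef, h1, h2]
    rw [hsplit]
    rw [NPPT.sum_two_point (by simp [Prod.ext_iff]; intro h; exact absurd h hne) _ _]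
    ring
  have hWnotpsd : ¬ W.PosSemidef := by
    intro hPSD
    have h0 := hPSD.dotProduct_mulVec_nonneg v
    rw [hform] at h0
    rw [show (-2 * (k:ℂ)) = (((-2 * (k:ℝ) : ℝ)) : ℂ) by push_cast; ring] at h0
    have h1 := Complex.zero_le_real.mp h0
    have hk' : (2:ℝ) ≤ (k:ℝ) := by exact_mod_cast hk
    linarith
  -- a negative eigenvalue of W
  have hex : ∃ ie, hWherm.eigenvalues ie < 0 := by
    by_contra hno
    push_neg at hno
    exact hWnotpsd (hWherm.posSemidef_iff_eigenvalues_nonneg.mpr fun i => hno i)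
  obtain ⟨ie, hie⟩ := hex
  set μ : ℝ := hWherm.eigenvalues ie with hμdef
  set wv : Fin k × Fin k → ℂ :=
    (WithLp.equiv 2 ((_ : Fin k × Fin k) → ℂ)) (hWherm.eigenvectorBasis ie) with hwvdef
  have hwv : W *ᵥ wv = μ • wv := hWherm.mulVec_eigenvectorBasis ie
  have hwv0 : wv ≠ 0 := by
    intro h0
    have := (hWherm.eigenvectorBasis).orthonormal.ne_zero ie
    apply this
    apply (WithLp.equiv 2 _).injective
    rw [← hwvdef] at *
    rw [h0]
    exact rfl
  -- the right inverse via finite-dimensionality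
  set Z : Matrix (Fin k × Fin n) (Fin k × Fin n) ℂ := V - (μ:ℂ) • 1 with hZdef
  set S := LinearMap.range Ψ with hSdef
  have hFS : ∀ x ∈ S, Ψ (Z * x) ∈ S := fun x _ => ⟨Z * x, rfl⟩
  set F : Matrix (Fin k × Fin n) (Fin k × Fin n) ℂ →ₗ[ℂ] Matrix (Fin k × Fin n) (Fin k × Fin n) ℂ
    := Ψ ∘ₗ LinearMap.mulLeft ℂ Z with hFdef
  have hFS' : ∀ x ∈ S, F x ∈ S := fun x hx => hFS x hx
  set L := F.restrict hFS' with hLdef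
  have hinj : Function.Injective L := by
    rw [← LinearMap.ker_eq_bot, LinearMap.ker_eq_bot']
    rintro ⟨y, hy⟩ h0
    obtain ⟨x0, hx0⟩ := hy
    have hyΨ : Ψ y = y := by rw [← hx0, hΨid]
    have h0' : Ψ (Z * y) = 0 := by
      have := congrArg Subtype.val h0
      simpa [hLdef, LinearMap.restrict_apply, hFdef] using this
    have hVy : Ψ (V * y) = (μ:ℂ) • y := by
      have hZy : Z * y = V * y - (μ:ℂ) • y := by
        rw [hZdef, Matrix.sub_mul, Matrix.smul_mul, one_mul]
      rw [hZy, map_sub, LinearMap.map_smul, hyΨ] at h0'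
      exact sub_eq_zero.mp h0'
    have hymem : Ψ yᴴ = yᴴ := by rw [NPPT.herm_map hΨch.1 y, hyΨ]
    have hmodule := NPPT.module_lemma Ψ hΨch hΨ1 hΨid hymem (V * y)
    rw [hVy, mul_smul_comm, LinearMap.map_smul] at hmodule
    -- hmodule : μ • Ψ (yᴴ * y) = Ψ (yᴴ * (V * y))
    have hP1 : (Ψ (yᴴ * (V * y))).PosSemidef := by
      rw [← Matrix.mul_assoc]
      exact NPPT.map_posSemidef _ hΨch (hV.conjTranspose_mul_mul_same y)
    have hP2 : (Ψ (yᴴ * y)).PosSemidef :=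
      NPPT.map_posSemidef _ hΨch (Matrix.posSemidef_conjTranspose_mul_self y)
    have ht1 : (0:ℂ) ≤ (Ψ (yᴴ * (V * y))).trace := NPPT.psd_trace_nonneg hP1
    have ht2 : (0:ℂ) ≤ (Ψ (yᴴ * y)).trace := NPPT.psd_trace_nonneg hP2
    rw [← hmodule, Matrix.trace_smul] at ht1
    set t := (Ψ (yᴴ * y)).trace with htdef
    have htim : t.im = 0 := by
      have := (Complex.le_def.mp ht2).2
      simpa using this.symm
    have htre : 0 ≤ t.re := by
      have := (Complex.le_def.mp ht2).1
      simpa using this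
    have hre2 : 0 ≤ μ * t.re := by
      have := (Complex.le_def.mp ht1).1
      simpa [Complex.smul_re] using this
    have htre0 : t.re = 0 := by nlinarith
    have ht0 : t = 0 := Complex.ext (by simp [htre0]) (by simp [htim])
    have hΨyy : Ψ (yᴴ * y) = 0 := NPPT.psd_trace_eq_zero hP2 ht0
    have hSch := NPPT.schwarz Ψ hΨch hΨ1 y
    rw [hΨyy, hyΨ] at hSch
    have hforms : ∀ w, star w ⬝ᵥ (yᴴ * y) *ᵥ w = 0 := by
      intro w
      have hle := hSch.dotProduct_mulVec_nonneg w
      rw [zero_sub, Matrix.neg_mulVec, dotProduct_neg] at hle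
      have h1 : star w ⬝ᵥ (yᴴ * y) *ᵥ w ≤ 0 := by
        rwa [← neg_nonneg]
      exact le_antisymm h1 ((Matrix.posSemidef_conjTranspose_mul_self y).dotProduct_mulVec_nonneg w)
    have hyy : yᴴ * y = 0 := NPPT.matrix_eq_zero_of_forms _ hforms
    have hy0 : y = 0 := Matrix.conjTranspose_mul_self_eq_zero.mp hyy
    exact Subtype.ext hy0
  obtain ⟨ys, hys⟩ := (LinearMap.injective_iff_surjective.mp hinj) ⟨1, ⟨1, hΨ1⟩⟩
  set ym : Matrix (Fin k × Fin n) (Fin k × Fin n) ℂ := ys.val with hym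
  have hys' : Ψ (Z * ym) = 1 := by
    have := congrArg Subtype.val hys
    simpa [hLdef, LinearMap.restrict_apply, hFdef, hym] using this
  -- multiplicativity of Pm on Ψ-images
  have hblk_mul : ∀ (U Wm : Matrix (Fin k × Fin n) (Fin k × Fin n) ℂ) (i j : Fin k),
      NPPT.blk (U * Wm) i j = ∑ l : Fin k, NPPT.blk U i l * NPPT.blk Wm l j := by
    intro U Wm i j
    ext a c
    simp [NPPT.blk, Matrix.mul_apply, Fintype.sum_prod_type, Matrix.sum_apply]
  have hmemZ : ∀ i j, NPPT.blk Z i j ∈ Set.range φ := by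
    intro i j
    obtain ⟨xv, hxv⟩ : NPPT.blk V i j ∈ Set.range φ := ⟨NPPT.blk M0 j i, (hVblk i j).symm⟩
    have h1 : NPPT.blk Z i j = NPPT.blk V i j - (μ:ℂ) • NPPT.blk (1 : Matrix (Fin k × Fin n) (Fin k × Fin n) ℂ) i j := rfl
    rw [h1, hblk_one]
    by_cases hij : i = j
    · exact ⟨xv - (μ:ℂ) • 1, by rw [map_sub, LinearMap.map_smul, hxv, hunital, if_pos hij]⟩
    · exact ⟨xv, by rw [hxv, if_neg hij]; simp⟩
  have hmemY : ∀ i j, NPPT.blk ym i j ∈ Set.range φ := by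
    intro i j
    obtain ⟨x0, hx0⟩ := ys.2
    exact ⟨NPPT.blk x0 i j, by rw [hym, ← hx0]; rfl⟩
  have hPmmul : Pm (Ψ (Z * ym)) = Pm Z * Pm ym := by
    ext ⟨i, bb⟩ ⟨j, dd⟩
    rw [hPmdef, NPPT.blockMapL_apply]
    show π (NPPT.blk (Ψ (Z * ym)) i j) bb dd = _
    rw [hblkΨ, hblk_mul, map_sum, map_sum]
    rw [Finset.sum_congr rfl fun l _ => hmul _ (hmemZ i l) _ (hmemY l j)]
    show _ = ∑ q : Fin k × Fin k, Pm Z (i, bb) q * Pm ym q (j, dd)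
    rw [show (fun q : Fin k × Fin k => Pm Z (i, bb) q * Pm ym q (j, dd))
        = fun q => π (NPPT.blk Z i q.1) bb q.2 * π (NPPT.blk ym q.1 j) q.2 dd from rfl]
    rw [Fintype.sum_prod_type]
    rw [Matrix.sum_apply]
    refine Finset.sum_congr rfl fun l _ => ?_
    rw [Matrix.mul_apply]
  have hPm1 : Pm (1 : Matrix (Fin k × Fin n) (Fin k × Fin n) ℂ) = 1 := by
    ext ⟨i, a⟩ ⟨j, c⟩
    rw [hPmdef, NPPT.blockMapL_apply]
    show π (NPPT.blk 1 i j) a c = _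
    rw [hblk_one]
    by_cases hij : i = j <;> simp [hij, hπ1, Matrix.one_apply, Prod.ext_iff]
  have hPmZ : Pm Z = W - (μ:ℂ) • 1 := by
    rw [hZdef, map_sub, LinearMap.map_smul, hPm1, hPmV]
  have hright : (W - (μ:ℂ) • 1) * Pm ym = 1 := by
    rw [← hPmZ, ← hPmmul, hys', hPm1]
  have hleft : Pm ym * (W - (μ:ℂ) • 1) = 1 := mul_eq_one_comm.mp hright
  have hker : (W - (μ:ℂ) • 1) *ᵥ wv = 0 := by
    rw [Matrix.sub_mulVec, hwv]
    have : ((μ:ℂ) • (1 : Matrix (Fin k × Fin k) (Fin k × Fin k) ℂ)) *ᵥ wv = μ • wv := by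
      rw [Matrix.smul_mulVec, Matrix.one_mulVec]
      funext p
      simp [Complex.real_smul]
    rw [this, sub_self]
  have : wv = 0 := by
    calc wv = (1 : Matrix (Fin k × Fin k) (Fin k × Fin k) ℂ) *ᵥ wv := (Matrix.one_mulVec wv).symm
      _ = (Pm ym * (W - (μ:ℂ) • 1)) *ᵥ wv := by rw [hleft]
      _ = Pm ym *ᵥ ((W - (μ:ℂ) • 1) *ᵥ wv) := (Matrix.mulVec_mulVec _ _ _).symm
      _ = 0 := by rw [hker, Matrix.mulVec_zero]
  exact hwv0 this
end

section
/- Let S be a compact abelian topological semigroup. Then S contains an idempotent element; more precisely, the intersection K = ∩_{a ∈ S} aS is a nonempty minimal ideal of S and possesses a multiplicative identity, which is an idempotent of S. -/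
open Matrix Kronecker BigOperators
open scoped ComplexOrder

/-- a compact abelian topological semigroup contains an idempotent;
more precisely, `K = ⋂_{a ∈ S} aS` is a nonempty minimal ideal possessing a
multiplicative identity, which is an idempotent of `S`. -/
theorem compact_abelian_semigroup_idempotent {S : Type*} [CommSemigroup S]
    [TopologicalSpace S] [CompactSpace S] [T2Space S] [ContinuousMul S] [Nonempty S]
    (K : Set S) (hK : K = ⋂ a : S, Set.range (fun x => a * x)) :
    K.Nonempty ∧
    (∀ s : S, ∀ x ∈ K, s * x ∈ K) ∧
    (∀ I : Set S, I.Nonempty → (∀ s : S, ∀ x ∈ I, s * x ∈ I) → I ⊆ K → I = K) ∧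
    ∃ e ∈ K, (∀ x ∈ K, e * x = x) ∧ e * e = e := by
  -- Each a*S is nonempty, compact, closed; the family is directed downward.
  have hne : ∀ a : S, (Set.range (fun x => a * x)).Nonempty := fun a =>
    Set.range_nonempty _
  have hcomp : ∀ a : S, IsCompact (Set.range (fun x => a * x)) := fun a => by
    have : Set.range (fun x => a * x) = (fun x => a * x) '' Set.univ := by
      simp [Set.image_univ]
    rw [this]
    exact (isCompact_univ).image (continuous_const.mul continuous_id)
  have hclosed : ∀ a : S, IsClosed (Set.range (fun x => a * x)) := fun a =>
    (hcomp a).isClosed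
  have hdir : Directed (· ⊇ ·) (fun a : S => Set.range (fun x => a * x)) := by
    intro a b
    refine ⟨a * b, ?_, ?_⟩
    · rintro _ ⟨x, rfl⟩; exact ⟨b * x, (mul_assoc a b x).symm⟩
    · rintro _ ⟨x, rfl⟩
      refine ⟨a * x, ?_⟩
      show b * (a * x) = a * b * x
      rw [mul_comm a b, mul_assoc]
  have hKne : K.Nonempty := by
    rw [hK]
    exact IsCompact.nonempty_iInter_of_directed_nonempty_isCompact_isClosed
      _ hdir hne hcomp hclosed
  -- K is an ideal
  have hideal : ∀ s : S, ∀ x ∈ K, s * x ∈ K := by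
    intro s x hx
    rw [hK] at hx ⊢
    refine Set.mem_iInter.2 fun a => ?_
    obtain ⟨y, hy⟩ := Set.mem_iInter.1 hx a
    exact ⟨s * y, by rw [← hy]; simp only []; rw [← mul_assoc, mul_comm a s, mul_assoc]⟩
  -- K ⊆ bS for each b
  have hsub : ∀ b : S, K ⊆ Set.range (fun x => b * x) := by
    intro b
    rw [hK]; exact Set.iInter_subset _ b
  refine ⟨hKne, hideal, ?_, ?_⟩
  · -- minimality
    intro I hIne hIideal hIK
    obtain ⟨b, hb⟩ := hIne
    refine le_antisymm hIK ?_
    intro x hx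
    obtain ⟨y, hy⟩ := hsub b hx
    have hy' : b * y = x := hy
    have : y * b ∈ I := hIideal y b hb
    rwa [mul_comm, hy'] at this
  · -- identity / idempotent
    obtain ⟨k, hk⟩ := hKne
    obtain ⟨v, hv⟩ := hsub (k * k) hk
    simp only [] at hv
    refine ⟨k * v, ?_, ?_, ?_⟩
    · rw [mul_comm]; exact hideal v k hk
    · intro x hx
      obtain ⟨y, hy⟩ := hsub k hx
      simp only [] at hy
      calc (k * v) * x = (k * v) * (k * y) := by rw [hy]
        _ = ((k * k) * v) * y := by
              simp only [mul_assoc, mul_comm, mul_left_comm]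
        _ = k * y := by rw [hv]
        _ = x := hy
    · have he : k * v ∈ K := by rw [mul_comm]; exact hideal v k hk
      have hid : (k * v) * (k * v) = k * v := by
        calc (k * v) * (k * v) = ((k * k) * v) * v := by
              simp only [mul_assoc, mul_comm, mul_left_comm]
          _ = k * v := by rw [hv]
      exact hid
end

section
/- If φ is a contractive linear map on a finite-dimensional normed space, then some limit point of the sequence (φ^k)_{k≥1} of its iterates is an idempotent map. -/
open Matrix Kronecker BigOperators
open scoped ComplexOrder

open Filter in
/-- a contractive map on a finite-dimensional normed space has an
idempotent among the limit points of its sequence of iterates. -/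
theorem exists_idempotent_limit_point {E : Type*} [NormedAddCommGroup E]
    [NormedSpace ℂ E] [FiniteDimensional ℂ E] (φ : E →L[ℂ] E) (hφ : ‖φ‖ ≤ 1) :
    ∃ ψ : E →L[ℂ] E, ψ * ψ = ψ ∧ MapClusterPt ψ atTop (fun k : ℕ => φ ^ k) := by
  have hnorm : ∀ k : ℕ, ‖φ ^ k‖ ≤ 1 := by
    intro k
    induction k with
    | zero => rw [pow_zero]; exact ContinuousLinearMap.norm_id_le (E := E)
    | succ k ih =>
        calc ‖φ ^ (k+1)‖ = ‖φ ^ k * φ‖ := by rw [pow_succ]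
        _ ≤ ‖φ ^ k‖ * ‖φ‖ := norm_mul_le _ _
        _ ≤ 1 * 1 := mul_le_mul ih hφ (norm_nonneg _) zero_le_one
        _ = 1 := one_mul 1
  set u : ℕ → (E →L[ℂ] E) := fun k => φ ^ k with hu
  have hmem : ∀ ψ : E →L[ℂ] E, MapClusterPt ψ atTop u ↔
      ∀ N : ℕ, ∀ ε > (0:ℝ), ∃ k ≥ N, ‖φ ^ k - ψ‖ < ε := by
    intro ψ
    rw [mapClusterPt_iff_frequently]
    constructor
    · intro h N ε hε
      obtain ⟨k, hk, hks⟩ := (frequently_atTop.mp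
        (h (Metric.ball ψ ε) (Metric.ball_mem_nhds _ hε))) N
      exact ⟨k, hk, by simpa [u, dist_eq_norm] using hks⟩
    · intro h s hs
      rw [frequently_atTop]
      intro N
      obtain ⟨ε, hε, hball⟩ := Metric.mem_nhds_iff.mp hs
      obtain ⟨k, hk, hks⟩ := h N ε hε
      exact ⟨k, hk, hball (by simpa [dist_eq_norm] using hks)⟩
  set L : Set (E →L[ℂ] E) := {ψ | MapClusterPt ψ atTop u} with hL
  have hLnorm : ∀ ψ ∈ L, ‖ψ‖ ≤ 1 := by
    intro ψ hψ
    refine le_of_forall_pos_le_add fun ε hε => ?_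
    obtain ⟨k, -, hk⟩ := (hmem ψ).mp hψ 0 ε hε
    calc ‖ψ‖ ≤ ‖φ ^ k‖ + ‖ψ - φ ^ k‖ := by
          simpa using norm_add_le (φ ^ k) (ψ - φ ^ k)
    _ ≤ 1 + ε := add_le_add (hnorm k) (by rw [norm_sub_rev]; exact hk.le)
  have hLsub : L ⊆ Metric.closedBall 0 1 := fun ψ hψ => by
    simpa using hLnorm ψ hψ
  have hLclosed : IsClosed L := isClosed_setOf_clusterPt
  have hLcompact : IsCompact L :=
    (isCompact_closedBall (0 : E →L[ℂ] E) 1).of_isClosed_subset hLclosed hLsub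
  have hLne : L.Nonempty := by
    obtain ⟨ψ, -, hψ⟩ := (isCompact_closedBall (0 : E →L[ℂ] E) 1).exists_mapClusterPt
      (f := atTop) (u := u)
      (le_principal_iff.mpr (Filter.mem_map.mpr (Filter.univ_mem' fun k => by
        simpa using hnorm k)))
    exact ⟨ψ, hψ⟩
  have hLmul : ∀ x ∈ L, ∀ y ∈ L, x * y ∈ L := by
    intro x hx y hy
    rw [hL, Set.mem_setOf_eq, hmem]
    intro N ε hε
    obtain ⟨b, hbN, hb⟩ := (hmem y).mp hy N (ε/2) (by linarith)
    obtain ⟨a, -, ha⟩ := (hmem x).mp hx 0 (ε/2) (by linarith)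
    refine ⟨a + b, le_add_self.trans (Nat.add_le_add_left hbN a) , ?_⟩
    have key : φ ^ (a + b) - x * y = (φ ^ a - x) * φ ^ b + x * (φ ^ b - y) := by
      rw [pow_add]; noncomm_ring
    calc ‖φ ^ (a+b) - x * y‖ = ‖(φ ^ a - x) * φ ^ b + x * (φ ^ b - y)‖ := by rw [key]
    _ ≤ ‖(φ ^ a - x) * φ ^ b‖ + ‖x * (φ ^ b - y)‖ := norm_add_le _ _
    _ ≤ ‖φ ^ a - x‖ * ‖φ ^ b‖ + ‖x‖ * ‖φ ^ b - y‖ :=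
        add_le_add (norm_mul_le _ _) (norm_mul_le _ _)
    _ < ε/2 + ε/2 := add_lt_add_of_lt_of_le
        ((mul_le_of_le_one_right (norm_nonneg _) (hnorm b)).trans_lt ha)
        ((mul_le_of_le_one_left (norm_nonneg _) (hLnorm x hx)).trans hb.le)
    _ = ε := by ring
  obtain ⟨ψ, hψL, hid⟩ := exists_idempotent_in_compact_subsemigroup
    (fun r => continuous_mul_right r) L hLne hLcompact hLmul
  exact ⟨ψ, hid, hψL⟩
end

section
/- Let φ be a contractive linear map on a finite-dimensional normed space and let ψ be an idempotent that is a limit point of the iterates (φ^k). Then ‖φ^k − φ^k ∘ ψ‖ → 0 as k → ∞. -/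
open Matrix Kronecker BigOperators
open scoped ComplexOrder

open Filter in
/-- if `φ` is contractive and `ψ` is an idempotent limit point of
the iterates of `φ`, then `‖φ^k − φ^k ∘ ψ‖ → 0`. -/
theorem tendsto_pow_sub_pow_comp_idempotent {E : Type*} [NormedAddCommGroup E]
    [NormedSpace ℂ E] [FiniteDimensional ℂ E] (φ ψ : E →L[ℂ] E) (hφ : ‖φ‖ ≤ 1)
    (hidem : ψ * ψ = ψ) (hlim : MapClusterPt ψ atTop (fun k : ℕ => φ ^ k)) :
    Tendsto (fun k : ℕ => ‖φ ^ k - φ ^ k * ψ‖) atTop (nhds 0) := by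
  set a : ℕ → ℝ := fun n => ‖φ ^ n - φ ^ n * ψ‖ with ha
  have hanti : ∀ n, a (n + 1) ≤ a n := by
    intro n
    have h1 : φ ^ (n + 1) - φ ^ (n + 1) * ψ = φ * (φ ^ n - φ ^ n * ψ) := by
      rw [pow_succ', mul_sub, mul_assoc]
    calc a (n + 1) = ‖φ * (φ ^ n - φ ^ n * ψ)‖ := by rw [ha]; simp only [h1]
      _ ≤ ‖φ‖ * ‖φ ^ n - φ ^ n * ψ‖ := norm_mul_le _ _
      _ ≤ 1 * a n := mul_le_mul_of_nonneg_right hφ (norm_nonneg _)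
      _ = a n := one_mul _
  have hAnti : Antitone a := antitone_nat_of_succ_le hanti
  rw [Metric.tendsto_atTop]
  intro ε hε
  have hpos : (0 : ℝ) < 1 + ‖ψ‖ := by positivity
  set δ := ε / (1 + ‖ψ‖) with hδ
  have hδpos : 0 < δ := div_pos hε hpos
  have hfreq : ∃ᶠ k in atTop, (fun k : ℕ => φ ^ k) k ∈ Metric.ball ψ δ :=
    mapClusterPt_iff_frequently.mp hlim _ (Metric.ball_mem_nhds _ hδpos)
  obtain ⟨k, hk⟩ := hfreq.exists
  have hknorm : ‖φ ^ k - ψ‖ < δ := by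
    rw [← dist_eq_norm]; exact hk
  have key : φ ^ k - φ ^ k * ψ = (φ ^ k - ψ) - (φ ^ k - ψ) * ψ := by
    rw [sub_mul, hidem]; abel
  have hak : a k < ε := by
    calc a k = ‖(φ ^ k - ψ) - (φ ^ k - ψ) * ψ‖ := by rw [ha]; simp only [key]
      _ ≤ ‖φ ^ k - ψ‖ + ‖(φ ^ k - ψ) * ψ‖ := norm_sub_le _ _
      _ ≤ ‖φ ^ k - ψ‖ + ‖φ ^ k - ψ‖ * ‖ψ‖ := by gcongr; exact norm_mul_le _ _
      _ = ‖φ ^ k - ψ‖ * (1 + ‖ψ‖) := by ring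
      _ < δ * (1 + ‖ψ‖) := by gcongr
      _ = ε := by rw [hδ, div_mul_cancel₀ _ (ne_of_gt hpos)]
  refine ⟨k, fun n hn => ?_⟩
  have h1 : a n ≤ a k := hAnti hn
  have h2 : 0 ≤ a n := norm_nonneg _
  rw [Real.dist_eq, sub_zero, abs_of_nonneg h2]
  exact lt_of_le_of_lt h1 hak
end

section
/- Let A be the adjacency matrix of a (nonzero) graph on p vertices, δ(X) = (Tr(X)/p)·I, and γ_t = tδ + S_A where S_A is Schur multiplication by A. Then γ_t is completely positive if and only if t ≥ −p·λ_min(A), where λ_min(A) is the least eigenvalue of A. -/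
open Matrix Kronecker BigOperators
open scoped ComplexOrder

section Aux
open Matrix

lemma choi_gamma_entry {p : ℕ} (t : ℝ) (A : Matrix (Fin p) (Fin p) ℂ)
    (i k j l : Fin p) :
    choi (gammaMap t A) (i,k) (j,l)
      = (t / p : ℂ) * ((if i = j then 1 else 0) * (if k = l then 1 else 0))
        + (if i = k ∧ j = l then A k l else 0) := by
  simp only [choi, gammaMap, deltaMap, schurMap, LinearMap.add_apply, LinearMap.smul_apply,
    LinearMap.coe_mk, AddHom.coe_mk, Matrix.add_apply, Matrix.smul_apply, Matrix.hadamard_apply,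
    Matrix.trace, Matrix.diag, Matrix.single, Matrix.one_apply, smul_eq_mul]
  simp only [Matrix.of_apply]
  have : (∑ x : Fin p, if i = x ∧ j = x then (1:ℂ) else 0) = if i = j then 1 else 0 := by
    by_cases h : i = j
    · subst h; simp
    · rw [Finset.sum_eq_zero, if_neg h]
      intro x _
      rw [if_neg]
      rintro ⟨rfl, rfl⟩; exact h rfl
  rw [this]
  by_cases hkl : i = k ∧ j = l <;> by_cases hij : i = j <;> by_cases hkl2 : k = l <;>
    simp [hkl, hij, hkl2] <;> ring


lemma herm_quad {p : ℕ} {A : Matrix (Fin p) (Fin p) ℂ} (hA : A.IsHermitian) (v : Fin p → ℂ) :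
    star v ⬝ᵥ A *ᵥ v = ∑ i, (hA.eigenvalues i : ℂ) *
      (Complex.normSq ((star (hA.eigenvectorUnitary : Matrix (Fin p) (Fin p) ℂ) *ᵥ v) i) : ℂ) := by
  conv_lhs => rw [hA.spectral_theorem, Unitary.conjStarAlgAut_apply]
  set U := (hA.eigenvectorUnitary : Matrix (Fin p) (Fin p) ℂ) with hU
  set w := star U *ᵥ v with hw
  have h1 : (U * diagonal ((RCLike.ofReal : ℝ → ℂ) ∘ hA.eigenvalues) * star U) *ᵥ v
      = U *ᵥ (diagonal ((RCLike.ofReal : ℝ → ℂ) ∘ hA.eigenvalues) *ᵥ w) := by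
    rw [mulVec_mulVec, mulVec_mulVec, Matrix.mul_assoc]
  rw [h1, dotProduct_mulVec]
  have h2 : star v ᵥ* U = star w := by
    rw [hw, star_mulVec, Matrix.star_eq_conjTranspose, Matrix.conjTranspose_conjTranspose]
  rw [h2]
  simp only [dotProduct, Pi.star_apply, mulVec_diagonal, Function.comp_apply]
  refine Finset.sum_congr rfl fun i _ => ?_
  rw [show (Complex.normSq (w i) : ℂ) = star (w i) * w i from
    (Complex.normSq_eq_conj_mul_self (z := w i)).symm ▸ rfl]
  rw [← mul_assoc, ← mul_assoc, mul_comm (star (w i))]; rfl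

lemma unitary_norm {p : ℕ} {A : Matrix (Fin p) (Fin p) ℂ} (hA : A.IsHermitian) (v : Fin p → ℂ) :
    (∑ i, (Complex.normSq ((star (hA.eigenvectorUnitary : Matrix (Fin p) (Fin p) ℂ) *ᵥ v) i) : ℂ))
      = ∑ i, (Complex.normSq (v i) : ℂ) := by
  set U := (hA.eigenvectorUnitary : Matrix (Fin p) (Fin p) ℂ) with hU
  set w := star U *ᵥ v with hw
  have h1 : (∑ i, (Complex.normSq (w i) : ℂ)) = star w ⬝ᵥ w := by
    simp only [dotProduct, Pi.star_apply]
    exact Finset.sum_congr rfl fun i _ => Complex.normSq_eq_conj_mul_self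
  have h2 : (∑ i, (Complex.normSq (v i) : ℂ)) = star v ⬝ᵥ v := by
    simp only [dotProduct, Pi.star_apply]
    exact Finset.sum_congr rfl fun i _ => Complex.normSq_eq_conj_mul_self
  rw [h1, h2, hw, star_mulVec, Matrix.star_eq_conjTranspose, Matrix.conjTranspose_conjTranspose,
    ← dotProduct_mulVec, mulVec_mulVec]
  rw [show U * Uᴴ = 1 from ?_, Matrix.one_mulVec]
  rw [← Matrix.star_eq_conjTranspose]
  exact Unitary.coe_mul_star_self hA.eigenvectorUnitary


lemma quad_gamma {p : ℕ} (t : ℝ) (A : Matrix (Fin p) (Fin p) ℂ) (x : Fin p × Fin p → ℂ) :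
    star x ⬝ᵥ (choi (gammaMap t A)) *ᵥ x
      = ((t : ℂ)/p) * (∑ a, (Complex.normSq (x a) : ℂ))
        + star (fun i => x (i,i)) ⬝ᵥ A *ᵥ (fun i => x (i,i)) := by
  have inner : ∀ i k : Fin p, (∑ b : Fin p × Fin p, choi (gammaMap t A) (i,k) b * x b)
      = ((t:ℂ)/p) * x (i,k) + (if i = k then ∑ j, A k j * x (j,j) else 0) := by
    intro i k
    rw [Fintype.sum_prod_type]
    have e1 : ∀ j l : Fin p, choi (gammaMap t A) (i,k) (j,l) * x (j,l)
        = (if l = k then (if j = i then ((t:ℂ)/p) * x (j,l) else 0) else 0)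
          + (if l = j then (if i = k then A k l * x (j,l) else 0) else 0) := by
      intro j l
      rw [choi_gamma_entry]
      by_cases h1 : i = j <;> by_cases h2 : k = l <;> by_cases h3 : i = k <;>
        by_cases h4 : j = l <;>
        first
          | (simp only [h1, h2, h3, h4, eq_comm, if_true, if_false, and_true, and_false,
               true_and, false_and, add_mul, one_mul, zero_mul, mul_one, mul_zero, add_zero,
               zero_add, if_pos rfl, eq_self_iff_true]; try simp_all; try ring)
          | (simp_all; try ring)
          | skip
    simp_rw [e1, Finset.sum_add_distrib, Finset.sum_ite_eq', Finset.mem_univ, if_true]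
    by_cases h : i = k
    · simp [h]
    · simp [h]
  simp only [dotProduct, mulVec, Pi.star_apply]
  calc ∑ a : Fin p × Fin p, star (x a) * ∑ b : Fin p × Fin p, choi (gammaMap t A) a b * x b
      = ∑ a : Fin p × Fin p, (((t:ℂ)/p) * (star (x a) * x a)
          + star (x a) * (if a.1 = a.2 then ∑ j, A a.2 j * x (j,j) else 0)) := by
        refine Finset.sum_congr rfl fun a _ => ?_
        rw [show (a : Fin p × Fin p) = (a.1, a.2) from rfl, inner a.1 a.2]
        ring
    _ = ((t:ℂ)/p) * (∑ a, (Complex.normSq (x a) : ℂ))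
        + ∑ a : Fin p × Fin p, star (x a) * (if a.1 = a.2 then ∑ j, A a.2 j * x (j,j) else 0) := by
        rw [Finset.sum_add_distrib, ← Finset.mul_sum]
        congr 2
        refine Finset.sum_congr rfl fun a _ => ?_
        exact (Complex.normSq_eq_conj_mul_self (z := x a)).symm ▸ rfl
    _ = ((t:ℂ)/p) * (∑ a, (Complex.normSq (x a) : ℂ))
        + ∑ i : Fin p, star (x (i,i)) * ∑ j, A i j * x (j,j) := by
        congr 1
        rw [Fintype.sum_prod_type]
        refine Finset.sum_congr rfl fun i _ => ?_
        rw [Finset.sum_eq_single i]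
        · simp
        · intro k _ hk
          simp [Ne.symm hk]
        · simp
    _ = _ := by
        simp only [dotProduct, mulVec, Pi.star_apply]


lemma star_dot_self_eq_normSq {p : ℕ} (u : Fin p → ℂ) :
    star u ⬝ᵥ u = ∑ i, (Complex.normSq (u i) : ℂ) := by
  simp only [dotProduct, Pi.star_apply]
  refine Finset.sum_congr rfl fun i _ => ?_
  rw [show (star (u i)) = (starRingEnd ℂ) (u i) from rfl]
  exact Complex.normSq_eq_conj_mul_self.symm

lemma eigenbasis_dot_self {p : ℕ} {A : Matrix (Fin p) (Fin p) ℂ} (hA : A.IsHermitian)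
    (i0 : Fin p) : star ⇑(hA.eigenvectorBasis i0) ⬝ᵥ ⇑(hA.eigenvectorBasis i0) = 1 := by
  have h := hA.eigenvectorBasis.orthonormal.1 i0
  have : (inner ℂ (hA.eigenvectorBasis i0) (hA.eigenvectorBasis i0) : ℂ)
      = star ⇑(hA.eigenvectorBasis i0) ⬝ᵥ ⇑(hA.eigenvectorBasis i0) :=
    (EuclideanSpace.inner_eq_star_dotProduct _ _).trans (dotProduct_comm _ _)
  rw [← this, inner_self_eq_norm_sq_to_K, h]
  norm_num

end Aux
/-- `A` is the adjacency matrix of a graph: a symmetric 0-1 matrix with zero diagonal. -/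
def IsAdjacencyMatrix {p : ℕ} (A : Matrix (Fin p) (Fin p) ℂ) : Prop :=
  Aᵀ = A ∧ (∀ i j, A i j = 0 ∨ A i j = 1) ∧ ∀ i, A i i = 0

/-- for a nonzero adjacency matrix `A`, the map `γ_t = tδ + S_A`
is completely positive iff `t ≥ −p·λ_min(A)`. -/
theorem gamma_cp_iff {p : ℕ} (A : Matrix (Fin p) (Fin p) ℂ)
    (hadj : IsAdjacencyMatrix A) (hA : A ≠ 0) (hherm : A.IsHermitian) (t : ℝ) :
    IsCP (gammaMap t A) ↔ -(p : ℝ) * (⨅ i, hherm.eigenvalues i) ≤ t := by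
  classical
  have hp : 0 < p := by
    rcases Nat.eq_zero_or_pos p with h0 | h
    · subst h0
      exact absurd (by ext i; exact i.elim0) hA
    · exact h
  have hp' : (0:ℝ) < p := by exact_mod_cast hp
  haveI : Nonempty (Fin p) := ⟨⟨0, hp⟩⟩
  set lam := ⨅ i, hherm.eigenvalues i with hlamdef
  obtain ⟨i0, hi0⟩ := Finite.exists_min hherm.eigenvalues
  have hlam : lam = hherm.eigenvalues i0 :=
    le_antisymm (ciInf_le (Finite.bddBelow_range _) i0) (le_ciInf hi0)
  have hlam_le : ∀ i, lam ≤ hherm.eigenvalues i := fun i => hlam ▸ hi0 i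
  have htr : ∑ i, hherm.eigenvalues i = 0 := by
    have h1 : A.trace = 0 := by
      simp [Matrix.trace, Matrix.diag, hadj.2.2]
    have h2 : A.trace = ∑ i, (hherm.eigenvalues i : ℂ) := by
      conv_lhs => rw [hherm.spectral_theorem, Unitary.conjStarAlgAut_apply]
      rw [Matrix.trace_mul_cycle,
        show star (hherm.eigenvectorUnitary : Matrix (Fin p) (Fin p) ℂ) *
          (hherm.eigenvectorUnitary : Matrix (Fin p) (Fin p) ℂ) = 1 from
          Unitary.coe_star_mul_self _, Matrix.one_mul, Matrix.trace_diagonal]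
      rfl
    rw [h1] at h2
    have h3 : ((∑ i, hherm.eigenvalues i : ℝ) : ℂ) = 0 := by push_cast; exact h2.symm
    exact_mod_cast h3
  have hlam0 : lam ≤ 0 := by
    by_contra hcon
    push_neg at hcon
    have hpos : (0:ℝ) < ∑ i, hherm.eigenvalues i :=
      Finset.sum_pos (fun i _ => lt_of_lt_of_le hcon (hlam_le i)) Finset.univ_nonempty
    linarith
  constructor
  · intro hCP
    set u : Fin p → ℂ := ⇑(hherm.eigenvectorBasis i0) with hu
    set x : Fin p × Fin p → ℂ := fun a => if a.1 = a.2 then u a.1 else 0 with hxdef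
    have hq := hCP.dotProduct_mulVec_nonneg x
    rw [quad_gamma] at hq
    have hx : (fun i => x (i,i)) = u := by funext i; simp [hxdef]
    rw [hx] at hq
    have h1 : star u ⬝ᵥ A *ᵥ u = (hherm.eigenvalues i0 : ℂ) := by
      rw [hu, hherm.mulVec_eigenvectorBasis]
      rw [dotProduct_smul]
      have := eigenbasis_dot_self hherm i0
      rw [this]
      simp [RCLike.real_smul_eq_coe_smul (K := ℂ)]
    have h2 : (∑ a : Fin p × Fin p, (Complex.normSq (x a) : ℂ)) = 1 := by
      rw [Fintype.sum_prod_type]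
      have e : ∀ i : Fin p, (∑ k, (Complex.normSq (x (i,k)) : ℂ))
          = (Complex.normSq (u i) : ℂ) := by
        intro i
        rw [Finset.sum_eq_single i]
        · simp [hxdef]
        · intro k _ hk
          simp [hxdef, Ne.symm hk]
        · simp
      rw [Finset.sum_congr rfl fun i _ => e i, ← star_dot_self_eq_normSq,
        eigenbasis_dot_self hherm i0]
    rw [h1, h2, mul_one] at hq
    have h3 : ((t / p + hherm.eigenvalues i0 : ℝ) : ℂ) = (t:ℂ)/p + (hherm.eigenvalues i0 : ℂ) := by
      push_cast; ring
    rw [← h3, Complex.zero_le_real] at hq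
    rw [hlam]
    have h4 : -(hherm.eigenvalues i0) * p ≤ t := by
      have h5 : -(hherm.eigenvalues i0) ≤ t / p := by linarith
      exact (le_div_iff₀ hp').mp h5
    nlinarith [h4]
  · intro ht
    have hts : -lam ≤ t / p := by
      rw [le_div_iff₀ hp']
      nlinarith
    refine Matrix.PosSemidef.of_dotProduct_mulVec_nonneg ?_ ?_
    · show (choi (gammaMap t A))ᴴ = _
      ext ⟨i,k⟩ ⟨j,l⟩
      rw [Matrix.conjTranspose_apply, choi_gamma_entry, choi_gamma_entry]
      have hAs : ∀ a b : Fin p, star (A a b) = A b a := by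
        intro a b
        have := congrFun (congrFun hherm b) a
        rwa [Matrix.conjTranspose_apply] at this
      by_cases h1 : i = j <;> by_cases h2 : k = l <;> by_cases h3 : i = k <;> by_cases h4 : j = l <;>
        simp [h1, h2, h3, h4, eq_comm, star_add, star_mul', hAs, Complex.star_def, map_div₀,
          Complex.conj_ofReal, Complex.conj_natCast] <;> simp_all [hAs]
    · intro x
      rw [quad_gamma, herm_quad hherm]
      set v : Fin p → ℂ := fun i => x (i,i) with hv
      set w : Fin p → ℂ :=
        star (hherm.eigenvectorUnitary : Matrix (Fin p) (Fin p) ℂ) *ᵥ v with hw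
      set S : ℝ := ∑ a, Complex.normSq (x a) with hS
      set N : ℝ := ∑ i, Complex.normSq (v i) with hN
      have hNS : (∑ i, Complex.normSq (w i)) = N := by
        have h' := unitary_norm hherm v
        rw [← hw] at h'
        have h'' : (∑ i, Complex.normSq (w i)) = ∑ i, Complex.normSq (v i) := by
          exact_mod_cast h'
        rw [h'', hN]
      have key : ((t:ℂ)/p) * (∑ a, (Complex.normSq (x a) : ℂ))
          + ∑ i, (hherm.eigenvalues i : ℂ) * (Complex.normSq (w i) : ℂ)
          = ((t/p * S + ∑ i, hherm.eigenvalues i * Complex.normSq (w i) : ℝ) : ℂ) := by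
        rw [hS]
        push_cast
        ring
      rw [key, Complex.zero_le_real]
      have hS0 : 0 ≤ S := Finset.sum_nonneg fun a _ => Complex.normSq_nonneg _
      have hN0 : 0 ≤ N := Finset.sum_nonneg fun a _ => Complex.normSq_nonneg _
      have hNleS : N ≤ S := by
        rw [hN, hS, Fintype.sum_prod_type]
        refine Finset.sum_le_sum fun i _ => ?_
        exact Finset.single_le_sum (f := fun k => Complex.normSq (x (i,k)))
          (fun k _ => Complex.normSq_nonneg _) (Finset.mem_univ i)
      have hsum : lam * N ≤ ∑ i, hherm.eigenvalues i * Complex.normSq (w i) := by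
        rw [← hNS, Finset.mul_sum]
        exact Finset.sum_le_sum fun i _ =>
          mul_le_mul_of_nonneg_right (hlam_le i) (Complex.normSq_nonneg _)
      nlinarith [mul_le_mul_of_nonneg_right hts hS0, mul_le_mul_of_nonneg_left hNleS (neg_nonneg.mpr hlam0)]
end

section
/- Let A be the adjacency matrix of a graph G on p vertices with maximum vertex degree d. Then the Choi matrix of γ_{pd} = pd·δ + S_A, namely d·(I ⊗ I) + Σ_{(i,j)∈E} E_{ij} ⊗ E_{ij}, is separable; hence γ_{pd} is entanglement breaking and t_{eb} ≤ pd. -/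
open Matrix Kronecker BigOperators
open scoped ComplexOrder

namespace Aux17

variable {p q n : ℕ}

lemma separable_zero : Separable (0 : Matrix (Fin p × Fin q) (Fin p × Fin q) ℂ) :=
  ⟨0, fun k => 0, fun k => 0, fun k => k.elim0, fun k => k.elim0, by simp⟩

lemma separable_add {M N : Matrix (Fin p × Fin q) (Fin p × Fin q) ℂ}
    (hM : Separable M) (hN : Separable N) : Separable (M + N) := by
  obtain ⟨m, P, Q, hP, hQ, rfl⟩ := hM
  obtain ⟨n, R, S, hR, hS, rfl⟩ := hN
  refine ⟨m + n, Fin.append P R, Fin.append Q S, ?_, ?_, ?_⟩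
  · intro k
    refine Fin.addCases (fun i => ?_) (fun i => ?_) k
    · rw [Fin.append_left]; exact hP i
    · rw [Fin.append_right]; exact hR i
  · intro k
    refine Fin.addCases (fun i => ?_) (fun i => ?_) k
    · rw [Fin.append_left]; exact hQ i
    · rw [Fin.append_right]; exact hS i
  · rw [Fin.sum_univ_add]
    simp [Fin.append_left, Fin.append_right]

lemma separable_sum {ι : Type*} (s : Finset ι)
    (f : ι → Matrix (Fin p × Fin q) (Fin p × Fin q) ℂ)
    (h : ∀ i ∈ s, Separable (f i)) : Separable (∑ i ∈ s, f i) :=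
  Finset.sum_induction f Separable (fun _ _ ha hb => separable_add ha hb) separable_zero h

lemma psd_vecMulVec (v : Fin n → ℂ) : (vecMulVec v (star v)).PosSemidef := by
  rw [posSemidef_iff_dotProduct_mulVec]
  constructor
  · ext a b
    simp [vecMulVec_apply, conjTranspose_apply, mul_comm]
  · intro x
    have : star x ⬝ᵥ (vecMulVec v (star v) *ᵥ x) = star (star v ⬝ᵥ x) * (star v ⬝ᵥ x) := by
      simp only [dotProduct, mulVec, vecMulVec_apply, Pi.star_apply, star_sum, star_mul',
        star_star, Finset.sum_mul, Finset.mul_sum]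
      rw [Finset.sum_comm]
      congr 1; ext a; congr 1; ext b; ring
    rw [this]
    exact star_mul_self_nonneg _

lemma psd_smul {M : Matrix (Fin n) (Fin n) ℂ} (hM : M.PosSemidef) {c : ℂ} (hc : 0 ≤ c) :
    (c • M).PosSemidef := by
  have hcr : star c = c := by
    rw [Complex.nonneg_iff] at hc
    apply Complex.ext <;> simp [← hc.2]
  rw [posSemidef_iff_dotProduct_mulVec]
  constructor
  · unfold Matrix.IsHermitian
    rw [conjTranspose_smul, hcr, hM.1.eq]
  · intro x
    rw [smul_mulVec, dotProduct_smul, smul_eq_mul]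
    exact mul_nonneg hc (hM.dotProduct_mulVec_nonneg x)

lemma psd_stdBasis_diag (i : Fin n) : (Matrix.single i i (1:ℂ)).PosSemidef := by
  have : Matrix.single i i (1:ℂ) = vecMulVec (Pi.single i 1) (star (Pi.single i 1)) := by
    ext a b
    simp [vecMulVec_apply, Matrix.single, Pi.single_apply]
    split_ifs <;> simp_all
    omega
  rw [this]; exact psd_vecMulVec _

lemma separable_smul {M : Matrix (Fin p × Fin q) (Fin p × Fin q) ℂ} (c : ℝ) (hc : 0 ≤ c)
    (hM : Separable M) : Separable ((c : ℂ) • M) := by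
  obtain ⟨m, P, Q, hP, hQ, rfl⟩ := hM
  refine ⟨m, fun k => (c : ℂ) • P k, Q, fun k => psd_smul (hP k) (Complex.zero_le_real.2 hc),
    hQ, ?_⟩
  rw [Finset.smul_sum]
  simp [smul_kronecker]

def pv (i j : Fin n) (ω : ℂ) : Fin n → ℂ := fun a => if a = i then ω else if a = j then 1 else 0

lemma vmv_eq (i j : Fin n) (h : i ≠ j) (ω : ℂ) (hω : ω * star ω = 1) :
    vecMulVec (pv i j ω) (star (pv i j ω)) =
      Matrix.single i i 1 + Matrix.single j j 1 +
        ω • Matrix.single i j 1 + star ω • Matrix.single j i 1 := by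
  ext a b
  simp only [vecMulVec_apply, pv, Pi.star_apply, Matrix.add_apply, Matrix.smul_apply,
    Matrix.single, Matrix.of_apply, smul_eq_mul]
  by_cases hai : a = i <;> by_cases haj : a = j <;> by_cases hbi : b = i <;>
    by_cases hbj : b = j <;>
    simp_all [if_neg, star_one, star_zero] <;> simp_all [eq_comm]

def ph : Fin 4 → ℂ := ![1, Complex.I, -1, -Complex.I]

lemma ph_unit (k : Fin 4) : ph k * star (ph k) = 1 := by
  fin_cases k <;>
    simp [ph, Complex.star_def, Complex.conj_I, Complex.I_mul_I, mul_neg, neg_mul, neg_neg]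

/-- The separable matrix associated to the edge `{i,j}`. -/
def edgeT (i j : Fin n) : Matrix (Fin n × Fin n) (Fin n × Fin n) ℂ :=
  Matrix.single i i 1 ⊗ₖ Matrix.single i i 1 +
    Matrix.single i i 1 ⊗ₖ Matrix.single j j 1 +
    Matrix.single j j 1 ⊗ₖ Matrix.single i i 1 +
    Matrix.single j j 1 ⊗ₖ Matrix.single j j 1 +
    Matrix.single i j 1 ⊗ₖ Matrix.single i j 1 +
    Matrix.single j i 1 ⊗ₖ Matrix.single j i 1

lemma edge_expand (i j : Fin n) (h : i ≠ j) :
    ∑ k : Fin 4, ((1/4 : ℂ) • vecMulVec (pv i j (ph k)) (star (pv i j (ph k)))) ⊗ₖ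
      vecMulVec (pv i j (star (ph k))) (star (pv i j (star (ph k)))) = edgeT i j := by
  have e1 : ∀ k : Fin 4, vecMulVec (pv i j (ph k)) (star (pv i j (ph k))) =
      Matrix.single i i 1 + Matrix.single j j 1 +
        ph k • Matrix.single i j 1 + star (ph k) • Matrix.single j i 1 := fun k =>
    vmv_eq i j h (ph k) (ph_unit k)
  have e2 : ∀ k : Fin 4, vecMulVec (pv i j (star (ph k))) (star (pv i j (star (ph k)))) =
      Matrix.single i i 1 + Matrix.single j j 1 +
        star (ph k) • Matrix.single i j 1 + ph k • Matrix.single j i 1 := by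
    intro k
    have h2 := vmv_eq i j h (star (ph k)) (by rw [star_star, mul_comm]; exact ph_unit k)
    rw [star_star] at h2
    exact h2
  simp only [e1, e2, edgeT]
  rw [Fin.sum_univ_four]
  have p0 : ph 0 = 1 := rfl
  have p1 : ph 1 = Complex.I := rfl
  have p2 : ph 2 = -1 := rfl
  have p3 : ph 3 = -Complex.I := rfl
  rw [p0, p1, p2, p3]
  simp only [star_one, star_neg, Complex.star_def, Complex.conj_I, neg_neg, one_smul,
    smul_add, smul_smul, add_kronecker, kronecker_add, smul_kronecker, kronecker_smul]
  simp only [mul_assoc, mul_neg, neg_mul, neg_neg, Complex.I_mul_I, mul_one, one_mul]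
  match_scalars <;> (try ring_nf) <;> (try simp [Complex.I_sq]) <;> (try norm_num)

lemma edge_sep (i j : Fin n) (h : i ≠ j) : Separable (edgeT i j) := by
  refine ⟨4, fun k => (1/4 : ℂ) • vecMulVec (pv i j (ph k)) (star (pv i j (ph k))),
    fun k => vecMulVec (pv i j (star (ph k))) (star (pv i j (star (ph k)))), ?_, ?_,
    (edge_expand i j h).symm⟩
  · intro k
    refine psd_smul (psd_vecMulVec _) ?_
    have : ((1:ℂ)/4) = (((1:ℝ)/4 : ℝ) : ℂ) := by norm_num
    rw [this]
    exact Complex.zero_le_real.2 (by norm_num)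
  · intro k
    exact psd_vecMulVec _

lemma one_eq_sum_std : (1 : Matrix (Fin n) (Fin n) ℂ) = ∑ i, Matrix.single i i 1 := by
  ext a b
  simp only [Matrix.sum_apply, Matrix.single, Matrix.of_apply, Matrix.one_apply]
  by_cases hab : a = b
  · subst hab
    rw [Finset.sum_eq_single a (fun c _ hc => if_neg (fun hc' => hc hc'.1))
      (fun h => absurd (Finset.mem_univ a) h)]
    simp
  · rw [Finset.sum_eq_zero (fun c _ => ?_)]
    · simp [hab]
    · by_cases hca : c = a
      · subst hca
        exact if_neg (fun hc' => hab hc'.2)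
      · exact if_neg (fun hc' => hca hc'.1)

lemma one_kron : (1 : Matrix (Fin n × Fin n) (Fin n × Fin n) ℂ) =
    ∑ i : Fin n, ∑ k : Fin n, Matrix.single i i 1 ⊗ₖ Matrix.single k k 1 := by
  ext x y
  obtain ⟨a, b⟩ := x
  obtain ⟨c, e⟩ := y
  simp only [Matrix.sum_apply, Matrix.kroneckerMap_apply]
  rw [← Finset.sum_mul_sum]
  have h1 : ∀ a c : Fin n, (∑ i, Matrix.single i i (1:ℂ) a c) =
      (1 : Matrix (Fin n) (Fin n) ℂ) a c := by
    intro a c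
    conv_rhs => rw [one_eq_sum_std]
    rw [Matrix.sum_apply]
  rw [h1, h1]
  simp only [Matrix.one_apply, Prod.ext_iff, Prod.mk.injEq]
  by_cases hac : a = c <;> by_cases hbe : b = e <;> simp [hac, hbe]

end Aux17

/-- for a graph with adjacency matrix `A` on `p` vertices and
maximum degree `d`, the Choi matrix `d·(I ⊗ I) + Σ_{(i,j)∈E} E_{ij} ⊗ E_{ij}`
of `γ_{pd}` is separable; hence `γ_{pd}` is entanglement breaking and `t_eb ≤ pd`. -/
theorem gamma_pd_eb {p : ℕ} (A : Matrix (Fin p) (Fin p) ℂ)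
    (hadj : IsAdjacencyMatrix A) (d : ℕ)
    (hd : d = Finset.univ.sup fun i : Fin p =>
      (Finset.univ.filter fun j : Fin p => A i j = 1).card) :
    Separable ((d : ℂ) • (1 : Matrix (Fin p × Fin p) (Fin p × Fin p) ℂ) +
      ∑ i : Fin p, ∑ j : Fin p,
        A i j • (Matrix.single i j (1 : ℂ) ⊗ₖ Matrix.single i j (1 : ℂ))) ∧
    IsEB (gammaMap ((p : ℝ) * d) A) ∧
    sInf {t : ℝ | IsEB (gammaMap t A)} ≤ (p : ℝ) * d := by
  obtain ⟨hsym, h01, hdiag⟩ := hadj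
  have hA : ∀ i j, A j i = A i j := fun i j => congrFun (congrFun hsym i) j
  set deg : Fin p → ℕ := fun i => (Finset.univ.filter fun j : Fin p => A i j = 1).card with hdeg
  have hdle : ∀ i, deg i ≤ d := fun i => hd ▸ Finset.le_sup (Finset.mem_univ i)
  set c : Fin p → Fin p → ℝ := fun i k =>
    if i = k then (d : ℝ) - deg i else (d : ℝ) - (if A i k = 1 then 1 else 0) with hcdef
  have hc0 : ∀ i k, 0 ≤ c i k := by
    intro i k
    by_cases hik : i = k
    · simp only [hcdef, hik, if_pos rfl, sub_nonneg]
      exact_mod_cast hdle k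
    · simp only [hcdef, if_neg hik, sub_nonneg]
      by_cases h1 : A i k = 1
      · simp only [h1, if_pos rfl]
        have : 1 ≤ deg i := by
          rw [hdeg]
          exact Finset.card_pos.2 ⟨k, Finset.mem_filter.2 ⟨Finset.mem_univ _, h1⟩⟩
        exact_mod_cast this.trans (hdle i)
      · simp [h1]
  have hdegsum : ∀ i, (∑ j, A i j) = (deg i : ℂ) := by
    intro i
    have : (∑ j, A i j) = ∑ j, (if A i j = 1 then (1:ℂ) else 0) := by
      refine Finset.sum_congr rfl fun j _ => ?_
      rcases h01 i j with h0 | h1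
      · rw [h0, if_neg]; exact fun h => zero_ne_one h
      · rw [h1]; simp
    rw [this, Finset.sum_boole]
  -- the key algebraic identity
  have claim : (d : ℂ) • (1 : Matrix (Fin p × Fin p) (Fin p × Fin p) ℂ) +
      ∑ i : Fin p, ∑ j : Fin p,
        A i j • (Matrix.single i j (1 : ℂ) ⊗ₖ Matrix.single i j (1 : ℂ)) =
      (∑ i, ∑ k, ((c i k : ℝ) : ℂ) •
          (Matrix.single i i (1:ℂ) ⊗ₖ Matrix.single k k (1:ℂ))) +
        ∑ i, ∑ j, (A i j / 2) • Aux17.edgeT i j := by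
    have s4 : (∑ i : Fin p, ∑ j : Fin p, (A i j / 2) •
          (Matrix.single j j (1:ℂ) ⊗ₖ Matrix.single j j (1:ℂ))) =
        ∑ i, ∑ j, (A i j / 2) •
          (Matrix.single i i (1:ℂ) ⊗ₖ Matrix.single i i (1:ℂ)) := by
      rw [Finset.sum_comm]
      exact Finset.sum_congr rfl fun i _ => Finset.sum_congr rfl fun j _ => by rw [hA]
    have s3 : (∑ i : Fin p, ∑ j : Fin p, (A i j / 2) •
          (Matrix.single j j (1:ℂ) ⊗ₖ Matrix.single i i (1:ℂ))) =
        ∑ i, ∑ j, (A i j / 2) •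
          (Matrix.single i i (1:ℂ) ⊗ₖ Matrix.single j j (1:ℂ)) := by
      rw [Finset.sum_comm]
      exact Finset.sum_congr rfl fun i _ => Finset.sum_congr rfl fun j _ => by rw [hA]
    have s6 : (∑ i : Fin p, ∑ j : Fin p, (A i j / 2) •
          (Matrix.single j i (1:ℂ) ⊗ₖ Matrix.single j i (1:ℂ))) =
        ∑ i, ∑ j, (A i j / 2) •
          (Matrix.single i j (1:ℂ) ⊗ₖ Matrix.single i j (1:ℂ)) := by
      rw [Finset.sum_comm]
      exact Finset.sum_congr rfl fun i _ => Finset.sum_congr rfl fun j _ => by rw [hA]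
    have comb : ∀ X : Fin p → Fin p → Matrix (Fin p × Fin p) (Fin p × Fin p) ℂ,
        ((∑ i, ∑ j, (A i j / 2) • X i j) + ∑ i, ∑ j, (A i j / 2) • X i j) =
          ∑ i, ∑ j, A i j • X i j := by
      intro X
      rw [← Finset.sum_add_distrib]
      refine Finset.sum_congr rfl fun i _ => ?_
      rw [← Finset.sum_add_distrib]
      refine Finset.sum_congr rfl fun j _ => ?_
      rw [← add_smul]
      congr 1
      ring
    have hTsum : (∑ i, ∑ j, (A i j / 2) • Aux17.edgeT i j)
        = (∑ i, ∑ j, A i j •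
            (Matrix.single i i (1:ℂ) ⊗ₖ Matrix.single i i (1:ℂ)))
          + ((∑ i, ∑ j, A i j •
            (Matrix.single i i (1:ℂ) ⊗ₖ Matrix.single j j (1:ℂ)))
          + ∑ i, ∑ j, A i j •
            (Matrix.single i j (1:ℂ) ⊗ₖ Matrix.single i j (1:ℂ))) := by
      simp only [Aux17.edgeT, smul_add, Finset.sum_add_distrib]
      rw [s4, s3, s6]
      calc (∑ i, ∑ j, (A i j / 2) •
            (Matrix.single i i (1:ℂ) ⊗ₖ Matrix.single i i (1:ℂ)))
          + (∑ i, ∑ j, (A i j / 2) •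
            (Matrix.single i i (1:ℂ) ⊗ₖ Matrix.single j j (1:ℂ)))
          + (∑ i, ∑ j, (A i j / 2) •
            (Matrix.single i i (1:ℂ) ⊗ₖ Matrix.single j j (1:ℂ)))
          + (∑ i, ∑ j, (A i j / 2) •
            (Matrix.single i i (1:ℂ) ⊗ₖ Matrix.single i i (1:ℂ)))
          + (∑ i, ∑ j, (A i j / 2) •
            (Matrix.single i j (1:ℂ) ⊗ₖ Matrix.single i j (1:ℂ)))
          + (∑ i, ∑ j, (A i j / 2) •
            (Matrix.single i j (1:ℂ) ⊗ₖ Matrix.single i j (1:ℂ)))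
          = ((∑ i, ∑ j, (A i j / 2) •
            (Matrix.single i i (1:ℂ) ⊗ₖ Matrix.single i i (1:ℂ)))
          + (∑ i, ∑ j, (A i j / 2) •
            (Matrix.single i i (1:ℂ) ⊗ₖ Matrix.single i i (1:ℂ))))
          + (((∑ i, ∑ j, (A i j / 2) •
            (Matrix.single i i (1:ℂ) ⊗ₖ Matrix.single j j (1:ℂ)))
          + (∑ i, ∑ j, (A i j / 2) •
            (Matrix.single i i (1:ℂ) ⊗ₖ Matrix.single j j (1:ℂ))))
          + ((∑ i, ∑ j, (A i j / 2) •
            (Matrix.single i j (1:ℂ) ⊗ₖ Matrix.single i j (1:ℂ)))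
          + (∑ i, ∑ j, (A i j / 2) •
            (Matrix.single i j (1:ℂ) ⊗ₖ Matrix.single i j (1:ℂ))))) := by abel
        _ = _ := by
            rw [comb (fun i j => Matrix.single i i (1:ℂ) ⊗ₖ Matrix.single i i 1),
              comb (fun i j => Matrix.single i i (1:ℂ) ⊗ₖ Matrix.single j j 1),
              comb (fun i j => Matrix.single i j (1:ℂ) ⊗ₖ Matrix.single i j 1)]
    have hS1 : (∑ i : Fin p, ∑ j : Fin p, A i j •
          (Matrix.single i i (1:ℂ) ⊗ₖ Matrix.single i i (1:ℂ)))
        = ∑ i, (deg i : ℂ) •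
          (Matrix.single i i (1:ℂ) ⊗ₖ Matrix.single i i (1:ℂ)) := by
      refine Finset.sum_congr rfl fun i _ => ?_
      rw [← Finset.sum_smul, hdegsum i]
    have hmerge : ((∑ i, (deg i : ℂ) •
          (Matrix.single i i (1:ℂ) ⊗ₖ Matrix.single i i (1:ℂ)))
        + ∑ i, ∑ j, A i j •
          (Matrix.single i i (1:ℂ) ⊗ₖ Matrix.single j j (1:ℂ)))
        = ∑ i, ∑ k, (if i = k then (deg i : ℂ) else A i k) •
          (Matrix.single i i (1:ℂ) ⊗ₖ Matrix.single k k (1:ℂ)) := by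
      rw [← Finset.sum_add_distrib]
      refine Finset.sum_congr rfl fun i _ => ?_
      have hi : (deg i : ℂ) •
          (Matrix.single i i (1:ℂ) ⊗ₖ Matrix.single i i (1:ℂ))
          = ∑ k, (if i = k then (deg i : ℂ) else 0) •
            (Matrix.single i i (1:ℂ) ⊗ₖ Matrix.single k k (1:ℂ)) := by
        simp only [ite_smul, zero_smul, Finset.sum_ite_eq, Finset.mem_univ, if_true]
      rw [hi, ← Finset.sum_add_distrib]
      refine Finset.sum_congr rfl fun k _ => ?_
      rw [← add_smul]
      congr 1
      by_cases hik : i = k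
      · subst hik; simp [hdiag i]
      · simp [hik]
    have hone : (d : ℂ) • (1 : Matrix (Fin p × Fin p) (Fin p × Fin p) ℂ)
        = ∑ i, ∑ k, (d : ℂ) •
          (Matrix.single i i (1:ℂ) ⊗ₖ Matrix.single k k (1:ℂ)) := by
      rw [Aux17.one_kron]
      simp [Finset.smul_sum]
    have hfinal : ((∑ i, ∑ k, ((c i k : ℝ) : ℂ) •
          (Matrix.single i i (1:ℂ) ⊗ₖ Matrix.single k k (1:ℂ)))
        + ∑ i, ∑ k, (if i = k then (deg i : ℂ) else A i k) •
          (Matrix.single i i (1:ℂ) ⊗ₖ Matrix.single k k (1:ℂ)))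
        = ∑ i, ∑ k, (d : ℂ) •
          (Matrix.single i i (1:ℂ) ⊗ₖ Matrix.single k k (1:ℂ)) := by
      rw [← Finset.sum_add_distrib]
      refine Finset.sum_congr rfl fun i _ => ?_
      rw [← Finset.sum_add_distrib]
      refine Finset.sum_congr rfl fun k _ => ?_
      rw [← add_smul]
      congr 1
      by_cases hik : i = k
      · subst hik
        simp only [hcdef, if_pos rfl]
        push_cast
        ring
      · simp only [hcdef, if_neg hik]
        rcases h01 i k with h0 | h1
        · rw [h0, if_neg (fun h => zero_ne_one h)]
          push_cast
          ring
        · rw [h1, if_pos rfl]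
          push_cast
          ring
    rw [hone, hTsum, hS1, ← hfinal, ← hmerge]
    abel
  -- separability of the right-hand side
  have hsep : Separable ((d : ℂ) • (1 : Matrix (Fin p × Fin p) (Fin p × Fin p) ℂ) +
      ∑ i : Fin p, ∑ j : Fin p,
        A i j • (Matrix.single i j (1 : ℂ) ⊗ₖ Matrix.single i j (1 : ℂ))) := by
    rw [claim]
    refine Aux17.separable_add ?_ ?_
    · refine Aux17.separable_sum _ _ fun i _ => Aux17.separable_sum _ _ fun k _ => ?_
      have : ((c i k : ℝ) : ℂ) •
          (Matrix.single i i (1:ℂ) ⊗ₖ Matrix.single k k (1:ℂ))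
          = ((c i k : ℝ) : ℂ) • (Matrix.single i i (1:ℂ) ⊗ₖ Matrix.single k k 1) :=
        rfl
      exact Aux17.separable_smul _ (hc0 i k)
        ⟨1, fun _ => Matrix.single i i 1, fun _ => Matrix.single k k 1,
          fun _ => Aux17.psd_stdBasis_diag i, fun _ => Aux17.psd_stdBasis_diag k, by simp⟩
    · refine Aux17.separable_sum _ _ fun i _ => Aux17.separable_sum _ _ fun j _ => ?_
      rcases h01 i j with h0 | h1
      · rw [h0]
        simp only [zero_div, zero_smul]
        exact Aux17.separable_zero
      · have hij : i ≠ j := by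
          rintro rfl
          rw [hdiag i] at h1
          exact zero_ne_one h1
        rw [h1]
        have hhalf : ((1:ℂ) / 2) = (((1/2 : ℝ)) : ℂ) := by norm_num
        rw [hhalf]
        exact Aux17.separable_smul _ (by norm_num) (Aux17.edge_sep i j hij)
  have heb : IsEB (gammaMap ((p : ℝ) * d) A) := by
    have hchoi : choi (gammaMap ((p : ℝ) * d) A) =
        (d : ℂ) • (1 : Matrix (Fin p × Fin p) (Fin p × Fin p) ℂ) +
          ∑ i : Fin p, ∑ j : Fin p,
            A i j • (Matrix.single i j (1 : ℂ) ⊗ₖ Matrix.single i j (1 : ℂ)) := by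
      rcases Nat.eq_zero_or_pos p with hp0 | hp0
      · subst hp0
        funext x y
        exact x.1.elim0
      have hp : (p : ℂ) ≠ 0 := Nat.cast_ne_zero.2 hp0.ne'
      funext x y
      obtain ⟨i, k⟩ := x
      obtain ⟨j, l⟩ := y
      have htr : Matrix.trace (Matrix.single i j (1:ℂ)) = if i = j then 1 else 0 := by
        by_cases hij : i = j
        · subst hij
          simp [Matrix.trace, Matrix.diag, Matrix.single, Finset.sum_ite_eq]
        · rw [if_neg hij]
          refine Finset.sum_eq_zero fun x _ => ?_
          exact if_neg fun h => hij (h.1.trans h.2.symm)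
      have hsumentry : (∑ a : Fin p, ∑ b : Fin p,
            A a b • (Matrix.single a b (1:ℂ) ⊗ₖ Matrix.single a b (1:ℂ)))
            (i, k) (j, l) = if i = k ∧ j = l then A i j else 0 := by
        simp only [Matrix.sum_apply, Matrix.smul_apply, Matrix.kroneckerMap_apply, smul_eq_mul]
        rw [Finset.sum_eq_single i
          (fun a _ ha => Finset.sum_eq_zero fun b _ => by
            simp [Matrix.single, ha])
          (fun h => absurd (Finset.mem_univ i) h)]
        rw [Finset.sum_eq_single j
          (fun b _ hb => by simp [Matrix.single, hb])
          (fun h => absurd (Finset.mem_univ j) h)]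
        by_cases h2 : i = k ∧ j = l
        · simp [Matrix.single, h2.1, h2.2, h2]
        · rw [if_neg h2]
          simp [Matrix.single, h2]
      show (gammaMap ((p : ℝ) * d) A) (Matrix.single i j 1) k l = _
      rw [Matrix.add_apply, hsumentry]
      have hlhs : (gammaMap ((p : ℝ) * d) A) (Matrix.single i j 1) k l
          = (↑p * ↑d) * ((if i = j then (1:ℂ) else 0) / ↑p * (if k = l then 1 else 0))
            + A k l * (if i = k ∧ j = l then 1 else 0) := by
        simp only [gammaMap, LinearMap.add_apply, LinearMap.smul_apply, deltaMap, schurMap,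
          LinearMap.coe_mk, AddHom.coe_mk, Matrix.add_apply, Matrix.smul_apply, smul_eq_mul,
          Matrix.hadamard_apply, htr, Matrix.one_apply]
        rw [show Matrix.single i j (1:ℂ) k l = (if i = k ∧ j = l then 1 else 0) from rfl]
        push_cast
        ring
      have hrhs1 : ((d : ℂ) • (1 : Matrix (Fin p × Fin p) (Fin p × Fin p) ℂ)) (i, k) (j, l)
          = (d : ℂ) * (if i = j ∧ k = l then 1 else 0) := by
        rw [Matrix.smul_apply, Matrix.one_apply, smul_eq_mul]
        simp only [Prod.mk.injEq]
      rw [hlhs, hrhs1]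
      by_cases h2 : i = k ∧ j = l
      · obtain ⟨rfl, rfl⟩ := h2
        simp only [and_self, if_pos rfl]
        by_cases hij : i = j <;>
          simp only [hij, if_true, if_false, ite_true, ite_false] <;>
          first
            | (field_simp; done)
            | simp
      · rw [if_neg h2, mul_zero, add_zero]
        rw [show (if i = k ∧ j = l then A i j else 0) = 0 from if_neg h2, add_zero]
        by_cases hij : i = j <;> by_cases hkl : k = l <;>
          simp only [hij, hkl, and_self, if_true, if_false, true_and, ite_true, ite_false,
            mul_zero, zero_mul, mul_one, and_false, false_and] <;>
          first
            | (field_simp; done)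
            | simp
    unfold IsEB
    rw [hchoi]
    exact hsep
  refine ⟨hsep, heb, ?_⟩
  by_cases hb : BddBelow {t : ℝ | IsEB (gammaMap t A)}
  · exact csInf_le hb heb
  · rw [Real.sInf_of_not_bddBelow hb]
    positivity
end
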